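/- arXiv:1304.0845 — 5 statements merged into one kernel-verified Lean document; each statement's English description precedes it below -/
import Mathlib

section
/- In the setting of the adversary-matrix construction, if α_0 ≥ 0 and α_1, …, α_{n−k} are arbitrary reals, then ‖Γ̃‖ ≥ α_0 · √(C(n,k)), where C(n,k) is the binomial coefficient n choose k. -/
open scoped BigOperators

/-- `T ⊆ X^ι` is an orthogonal array of strength `d` and index `1`. -/
def IsOA {X ι : Type*} [Fintype X] [Fintype ι] (d : ℕ) (T : Finset (ι → X)) : Prop :=
  T.card = Fintype.card X ^ d ∧
    ∀ D : Finset ι, D.card = d → ∀ y : ι → X, ∃! x, x ∈ T ∧ ∀ i ∈ D, x i = y i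

/-- The weight of a tuple: the number of its nonzero entries. -/
def wt {q : ℕ} {ι : Type*} [Fintype ι] (v : ι → Fin q) : ℕ :=
  (Finset.univ.filter fun i => (v i).val ≠ 0).card

/-- Entries of the orthogonal projector `E^{(ι)}_j` onto the span of the basis tensors
`e_{v_1} ⊗ ⋯ ⊗ e_{v_m}` of weight `j`. -/
noncomputable def Eproj {q : ℕ} {ι : Type*} [Fintype ι] [DecidableEq ι]
    (e : Fin q → Fin q → ℝ) (j : ℕ) : Matrix (ι → Fin q) (ι → Fin q) ℝ :=
  fun x y => ∑ v ∈ Finset.univ.filter (fun v : ι → Fin q => wt v = j),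
    (∏ i, e (v i) (x i)) * (∏ i, e (v i) (y i))

/-- The spectral norm (largest singular value) of a real matrix. -/
noncomputable def specNorm {m l : Type*} [Fintype m] [Fintype l] [DecidableEq l]
    (A : Matrix m l ℝ) : ℝ :=
  ‖LinearMap.toContinuousLinearMap (Matrix.toEuclideanLin A)‖

/-- Restriction `x_S` of a string to a set of coordinates. -/
def restrict {n q : ℕ} (x : Fin n → Fin q) (S : Finset (Fin n)) :
    {i // i ∈ S} → Fin q := fun i => x i.1

/-- Row index set of the matrix `Γ̃`: pairs `(x, S)` of an input and a `k`-subset with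
`x_S ∈ T_S`. -/
abbrev Rows (q n k : ℕ) (T : (S : Finset (Fin n)) → Finset ({i // i ∈ S} → Fin q)) :=
  {p : (Fin n → Fin q) × Finset (Fin n) // p.2.card = k ∧ restrict p.1 p.2 ∈ T p.2}

/-- The matrix `Γ̃`, the stacking of the blocks `G̃_S = Σ_m α_m F_S ⊗ E^{(n-k)}_m`. -/
noncomputable def Gam {q n : ℕ} (k d : ℕ)
    (T : (S : Finset (Fin n)) → Finset ({i // i ∈ S} → Fin q))
    (e : Fin q → Fin q → ℝ) (α : ℕ → ℝ) :
    Matrix (Rows q n k T) (Fin n → Fin q) ℝ :=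
  fun p y =>
    ∑ m ∈ Finset.range (n - k + 1),
      α m *
        (Real.sqrt ((q : ℝ) ^ (k - d)) *
          ∑ j ∈ Finset.range (d + 1), Eproj e j (restrict p.1.1 p.1.2) (restrict y p.1.2)) *
        Eproj e m (restrict p.1.1 p.1.2ᶜ) (restrict y p.1.2ᶜ)


def mix {n q : ℕ} (S : Finset (Fin n)) (a : {i // i ∈ S} → Fin q)
    (b : {i // i ∈ Sᶜ} → Fin q) : Fin n → Fin q := fun i =>
  if h : i ∈ S then a ⟨i, h⟩ else b ⟨i, Finset.mem_compl.mpr h⟩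

def eSplit {n q : ℕ} (S : Finset (Fin n)) :
    (Fin n → Fin q) ≃ ({i // i ∈ S} → Fin q) × ({i // i ∈ Sᶜ} → Fin q) where
  toFun x := (restrict x S, restrict x Sᶜ)
  invFun ab := mix S ab.1 ab.2
  left_inv x := by
    funext i; by_cases h : i ∈ S <;> simp [mix, restrict, h]
  right_inv ab := by
    ext i
    · simp [mix, restrict, i.2]
    · have h : i.1 ∉ S := Finset.mem_compl.mp i.2
      simp [mix, restrict, h]

lemma sum_split {n q : ℕ} {M : Type*} [CommSemiring M] (S : Finset (Fin n))
    (f : ({i // i ∈ S} → Fin q) → M) (g : ({i // i ∈ Sᶜ} → Fin q) → M) :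
    ∑ x : Fin n → Fin q, f (restrict x S) * g (restrict x Sᶜ) =
      (∑ a, f a) * (∑ b, g b) := by
  have := Equiv.sum_comp (eSplit (n := n) (q := q) S)
    (fun ab : ({i // i ∈ S} → Fin q) × ({i // i ∈ Sᶜ} → Fin q) => f ab.1 * g ab.2)
  rw [show (∑ x : Fin n → Fin q, f (restrict x S) * g (restrict x Sᶜ)) =
      ∑ x : Fin n → Fin q, f ((eSplit S) x).1 * g ((eSplit S) x).2 from rfl, this,
    Finset.sum_mul_sum, Fintype.sum_prod_type]

lemma sum_e {q : ℕ} [NeZero q] (e : Fin q → Fin q → ℝ)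
    (he : ∀ i j : Fin q, ∑ x, e i x * e j x = if i = j then 1 else 0)
    (he0 : ∀ x : Fin q, e 0 x = 1 / Real.sqrt q) (w : Fin q) :
    ∑ t, e w t = Real.sqrt q * (if w = 0 then 1 else 0) := by
  have hs : (0:ℝ) < Real.sqrt q := Real.sqrt_pos.mpr (by
    exact_mod_cast Nat.pos_of_ne_zero (NeZero.ne q))
  have h := he w 0
  simp only [he0, mul_one_div] at h
  rw [← Finset.sum_div] at h
  field_simp at h
  rw [h]

lemma sum_Eproj {ι : Type*} [Fintype ι] [DecidableEq ι] {q : ℕ} [NeZero q]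
    (e : Fin q → Fin q → ℝ)
    (he : ∀ i j : Fin q, ∑ x, e i x * e j x = if i = j then 1 else 0)
    (he0 : ∀ x : Fin q, e 0 x = 1 / Real.sqrt q) (j : ℕ) (x : ι → Fin q) :
    ∑ y : ι → Fin q, Eproj e j x y = if j = 0 then 1 else 0 := by
  have hs : (0:ℝ) < Real.sqrt q := Real.sqrt_pos.mpr (by
    exact_mod_cast Nat.pos_of_ne_zero (NeZero.ne q))
  unfold Eproj
  rw [Finset.sum_comm]
  have key : ∀ v : ι → Fin q,
      ∑ y : ι → Fin q, (∏ i, e (v i) (x i)) * (∏ i, e (v i) (y i)) =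
      (∏ i, e (v i) (x i)) * ∏ i, (Real.sqrt q * if v i = 0 then 1 else 0) := by
    intro v
    rw [← Finset.mul_sum]
    congr 1
    rw [← Fintype.prod_sum (fun i t => e (v i) t)]
    exact Finset.prod_congr rfl fun i _ => sum_e e he he0 (v i)
  by_cases hj : j = 0
  · subst hj
    have hw : ∀ v : ι → Fin q, wt v = 0 ↔ v = 0 := by
      intro v
      simp only [wt, Finset.card_eq_zero, Finset.filter_eq_empty_iff, Finset.mem_univ, true_implies, not_not, funext_iff, Pi.zero_apply, Fin.val_eq_zero_iff]
    have hfilter : Finset.univ.filter (fun v : ι → Fin q => wt v = 0) = {(0 : ι → Fin q)} := by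
      ext v
      simp [hw]
    rw [hfilter, Finset.sum_singleton, key]
    have h1 : (∏ i, e ((0 : ι → Fin q) i) (x i)) = ∏ _i : ι, (1 / Real.sqrt q) :=
      Finset.prod_congr rfl fun i _ => by simp [he0]
    have h2 : (∏ i : ι, (Real.sqrt q * if (0 : ι → Fin q) i = 0 then 1 else 0)) =
        ∏ _i : ι, Real.sqrt q :=
      Finset.prod_congr rfl fun i _ => by simp
    rw [h1, h2, if_pos rfl, Finset.prod_const, Finset.prod_const, ← mul_pow,
      one_div_mul_cancel hs.ne', one_pow]
  · rw [if_neg hj]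
    apply Finset.sum_eq_zero
    intro v hv
    rw [key v]
    simp only [Finset.mem_filter, Finset.mem_univ, true_and] at hv
    obtain ⟨i, hi⟩ : ∃ i, v i ≠ 0 := by
      by_contra h
      push_neg at h
      apply hj
      rw [← hv]
      simp [wt, Finset.filter_eq_empty_iff, h]
    apply mul_eq_zero_of_right
    exact Finset.prod_eq_zero (Finset.mem_univ i) (by simp [hi])

lemma gam_rowsum {q n : ℕ} [NeZero q] (k d : ℕ)
    (T : (S : Finset (Fin n)) → Finset ({i // i ∈ S} → Fin q))
    (e : Fin q → Fin q → ℝ)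
    (he : ∀ i j : Fin q, ∑ x, e i x * e j x = if i = j then 1 else 0)
    (he0 : ∀ x : Fin q, e 0 x = 1 / Real.sqrt q)
    (α : ℕ → ℝ) (p : Rows q n k T) :
    ∑ y, Gam k d T e α p y = α 0 * Real.sqrt ((q : ℝ) ^ (k - d)) := by
  unfold Gam
  rw [Finset.sum_comm]
  have hm : ∀ m ∈ Finset.range (n - k + 1),
      (∑ y : Fin n → Fin q,
        α m * (Real.sqrt ((q : ℝ) ^ (k - d)) *
          ∑ j ∈ Finset.range (d + 1), Eproj e j (restrict p.1.1 p.1.2) (restrict y p.1.2)) *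
        Eproj e m (restrict p.1.1 p.1.2ᶜ) (restrict y p.1.2ᶜ)) =
      if m = 0 then α m * Real.sqrt ((q : ℝ) ^ (k - d)) else 0 := by
    intro m _
    rw [sum_split p.1.2
      (fun a => α m * (Real.sqrt ((q : ℝ) ^ (k - d)) *
        ∑ j ∈ Finset.range (d + 1), Eproj e j (restrict p.1.1 p.1.2) a))
      (fun b => Eproj e m (restrict p.1.1 p.1.2ᶜ) b)]
    rw [← Finset.mul_sum, ← Finset.mul_sum, Finset.sum_comm]
    have hj : (∑ j ∈ Finset.range (d + 1),
        ∑ a : {i // i ∈ p.1.2} → Fin q, Eproj e j (restrict p.1.1 p.1.2) a) = 1 := by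
      rw [Finset.sum_congr rfl fun j _ => sum_Eproj e he he0 j (restrict p.1.1 p.1.2)]
      rw [Finset.sum_ite_eq' (Finset.range (d + 1)) 0 (fun _ => (1:ℝ))]
      simp
    rw [hj, sum_Eproj e he he0 m (restrict p.1.1 p.1.2ᶜ)]
    by_cases hm0 : m = 0 <;> simp [hm0]
  rw [Finset.sum_congr rfl hm, Finset.sum_ite_eq' (Finset.range (n - k + 1)) 0
    (fun m => α m * Real.sqrt ((q : ℝ) ^ (k - d)))]
  simp

lemma card_rows {q n : ℕ} (k d : ℕ) (hd : d ≤ k) (hn : k ≤ n)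
    (T : (S : Finset (Fin n)) → Finset ({i // i ∈ S} → Fin q))
    (hT : ∀ S : Finset (Fin n), S.card = k → IsOA d (T S)) :
    Fintype.card (Rows q n k T) = n.choose k * (q ^ d * q ^ (n - k)) := by
  classical
  have e1 : Rows q n k T ≃
      Σ S : {S : Finset (Fin n) // S.card = k},
        {x : Fin n → Fin q // restrict x S.1 ∈ T S.1} :=
    { toFun := fun p => ⟨⟨p.1.2, p.2.1⟩, ⟨p.1.1, p.2.2⟩⟩
      invFun := fun s => ⟨(s.2.1, s.1.1), s.1.2, s.2.2⟩
      left_inv := fun p => rfl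
      right_inv := fun s => rfl }
  rw [Fintype.card_congr e1, Fintype.card_sigma]
  have h2 : ∀ S : {S : Finset (Fin n) // S.card = k},
      Fintype.card {x : Fin n → Fin q // restrict x S.1 ∈ T S.1} = q ^ d * q ^ (n - k) := by
    intro S
    rw [Fintype.card_subtype, Finset.card_filter]
    have hsplit := sum_split (M := ℕ) S.1
      (fun a => if a ∈ T S.1 then 1 else 0) (fun _ => 1)
    simp only [mul_one] at hsplit
    rw [hsplit]
    have hTc : (∑ a : {i // i ∈ S.1} → Fin q, if a ∈ T S.1 then 1 else 0) = q ^ d := by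
      rw [Finset.sum_ite_mem, Finset.univ_inter, Finset.sum_const, smul_eq_mul, mul_one]
      have := (hT S.1 S.2).1
      simpa [Fintype.card_fin] using this
    have hcompl : (∑ _b : {i // i ∈ S.1ᶜ} → Fin q, (1:ℕ)) = q ^ (n - k) := by
      rw [Finset.sum_const, smul_eq_mul, mul_one, Finset.card_univ, Fintype.card_fun]
      congr 1
      · exact Fintype.card_fin q
      · rw [Fintype.card_coe, Finset.card_compl, S.2, Fintype.card_fin]
    rw [hTc, hcompl]
  rw [Finset.sum_congr rfl fun S _ => h2 S, Finset.sum_const, smul_eq_mul]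
  congr 1
  simpa using Fintype.card_finset_len (α := Fin n) k

/-- Lemma 2(a) of the paper: in the setting of the adversary-matrix
construction, if `α 0 ≥ 0`, then `‖Γ̃‖ ≥ α 0 · √(C(n,k))`. -/
theorem gamma_norm_lower_bound
    {q n k d : ℕ} [NeZero q] (hq : 2 ≤ q) (hk : 1 ≤ k) (hd : d + 1 ≤ k) (hn : k ≤ n)
    (e : Fin q → Fin q → ℝ)
    (he : ∀ i j : Fin q, ∑ x, e i x * e j x = if i = j then 1 else 0)
    (he0 : ∀ x : Fin q, e 0 x = 1 / Real.sqrt q)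
    (T : (S : Finset (Fin n)) → Finset ({i // i ∈ S} → Fin q))
    (hT : ∀ S : Finset (Fin n), S.card = k → IsOA d (T S))
    (α : ℕ → ℝ) (hα : 0 ≤ α 0) :
    α 0 * Real.sqrt (n.choose k) ≤ specNorm (Gam k d T e α) := by
  classical
  have hq0 : (0:ℝ) < (q:ℝ) := by
    have : 0 < q := lt_of_lt_of_le Nat.zero_lt_two hq
    exact_mod_cast this
  set A := Gam k d T e α with hA
  set L := LinearMap.toContinuousLinearMap (Matrix.toEuclideanLin A) with hL
  set w : EuclideanSpace ℝ (Fin n → Fin q) :=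
    (WithLp.equiv 2 ((Fin n → Fin q) → ℝ)).symm (fun _ => 1) with hw
  have hcard : (∑ _y : Fin n → Fin q, (1:ℝ)) = (q:ℝ) ^ n := by
    rw [Finset.sum_const, nsmul_eq_mul, mul_one, Finset.card_univ, Fintype.card_fun,
      Fintype.card_fin, Fintype.card_fin]
    push_cast
    ring
  have hwnorm : ‖w‖ = Real.sqrt ((q:ℝ) ^ n) := by
    rw [hw, EuclideanSpace.norm_eq]
    simp only [WithLp.equiv_symm_apply, WithLp.ofLp_toLp, norm_one, one_pow]
    rw [hcard]
  have hLw : L w = (WithLp.equiv 2 (Rows q n k T → ℝ)).symm (A.mulVec (fun _ => 1)) := by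
    rw [hL, hw]
    simp only [LinearMap.coe_toContinuousLinearMap']
    exact Matrix.toEuclideanLin_apply_piLp_toLp A _
  have hmul : (A.mulVec (fun _ => 1)) = fun _ => α 0 * Real.sqrt ((q:ℝ) ^ (k - d)) := by
    funext p
    simp only [Matrix.mulVec, dotProduct, mul_one]
    exact gam_rowsum k d T e he he0 α p
  have hNval : ((Fintype.card (Rows q n k T) : ℝ)) =
      (n.choose k : ℝ) * ((q:ℝ) ^ d * (q:ℝ) ^ (n - k)) := by
    rw [card_rows k d (by omega) hn T hT]
    push_cast
    ring
  have hLwnorm : ‖L w‖ = α 0 * (Real.sqrt (n.choose k) * Real.sqrt ((q:ℝ) ^ n)) := by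
    rw [hLw, hmul, EuclideanSpace.norm_eq]
    simp only [WithLp.equiv_symm_apply, WithLp.ofLp_toLp, Real.norm_eq_abs, sq_abs]
    rw [Finset.sum_const, nsmul_eq_mul, Finset.card_univ, hNval]
    rw [mul_pow, Real.sq_sqrt (by positivity)]
    have hexp : (q:ℝ) ^ d * (q:ℝ) ^ (n - k) * (q:ℝ) ^ (k - d) = (q:ℝ) ^ n := by
      rw [← pow_add, ← pow_add]
      congr 1
      omega
    have : (n.choose k : ℝ) * ((q:ℝ) ^ d * (q:ℝ) ^ (n - k)) * (α 0 ^ 2 * (q:ℝ) ^ (k - d)) =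
        α 0 ^ 2 * ((n.choose k : ℝ) * (q:ℝ) ^ n) := by
      rw [← hexp]; ring
    rw [this, Real.sqrt_mul (sq_nonneg _), Real.sqrt_sq hα,
      Real.sqrt_mul (by positivity)]
  have hle : ‖L w‖ ≤ ‖L‖ * ‖w‖ := L.le_opNorm w
  rw [hLwnorm, hwnorm] at hle
  have hpos : (0:ℝ) < Real.sqrt ((q:ℝ) ^ n) := Real.sqrt_pos.mpr (by positivity)
  have hspec : specNorm A = ‖L‖ := rfl
  rw [hspec]
  rw [← mul_assoc] at hle
  exact le_of_mul_le_mul_right hle hpos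
end

section
/- In the setting of the adversary-matrix construction, for arbitrary real coefficients α_0, …, α_{n−k}, one has ‖Γ̃‖ ≤ C(k,d) · √(C(n,k)) · max_{0≤m≤n−k} |α_m|, where C(k,d) and C(n,k) are binomial coefficients. -/
open scoped BigOperators

open Finset
set_option linter.unusedSectionVars false
namespace GP
variable {q : ℕ} [NeZero q] {ι : Type*} [Fintype ι] [DecidableEq ι]

def Ehat (e : Fin q → Fin q → ℝ) (v x : ι → Fin q) : ℝ := ∏ i, e (v i) (x i)

lemma Eproj_eq (e : Fin q → Fin q → ℝ) (j : ℕ) (x y : ι → Fin q) :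
    Eproj e j x y = ∑ v ∈ Finset.univ.filter (fun v : ι → Fin q => wt v = j),
      Ehat e v x * Ehat e v y := rfl

variable {e : Fin q → Fin q → ℝ}
  (he : ∀ i j : Fin q, ∑ x, e i x * e j x = if i = j then 1 else 0)

include he in
lemma sum_ehat_mul_ehat (v v' : ι → Fin q) :
    ∑ x : ι → Fin q, Ehat e v x * Ehat e v' x = if v = v' then 1 else 0 := by
  have : ∀ x : ι → Fin q, Ehat e v x * Ehat e v' x = ∏ i, (e (v i) (x i) * e (v' i) (x i)) := by
    intro x; rw [Ehat, Ehat, ← Finset.prod_mul_distrib]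
  simp_rw [this]
  rw [← Fintype.prod_sum (fun i a => e (v i) a * e (v' i) a)]
  simp_rw [he]
  by_cases h : v = v'
  · simp [h]
  · simp only [h, if_false]
    obtain ⟨i, hi⟩ := Function.ne_iff.mp h
    exact Finset.prod_eq_zero (Finset.mem_univ i) (by simp [hi])

end GP

namespace GP
variable {q : ℕ} [NeZero q] {ι : Type*} [Fintype ι] [DecidableEq ι]
variable {e : Fin q → Fin q → ℝ}
  (he : ∀ i j : Fin q, ∑ x, e i x * e j x = if i = j then 1 else 0)

include he in
lemma he' (x x' : Fin q) : ∑ a, e a x * e a x' = if x = x' then 1 else 0 := by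
  have h1 : (Matrix.of e) * (Matrix.of e).transpose = 1 := by
    ext i j; simpa [Matrix.mul_apply, Matrix.one_apply, Matrix.transpose_apply] using he i j
  have h2 : (Matrix.of e).transpose * (Matrix.of e) = 1 := mul_eq_one_comm.mp h1
  have h3 := congrFun (congrFun h2 x) x'
  simpa [Matrix.mul_apply, Matrix.one_apply] using h3

include he in
lemma sum_ehat_mul_ehat' (x x' : ι → Fin q) :
    ∑ v : ι → Fin q, Ehat e v x * Ehat e v x' = if x = x' then 1 else 0 := by
  have h1 : ∀ v : ι → Fin q, Ehat e v x * Ehat e v x' = ∏ i, (e (v i) (x i) * e (v i) (x' i)) := by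
    intro v; rw [Ehat, Ehat, ← Finset.prod_mul_distrib]
  simp_rw [h1]
  rw [← Fintype.prod_sum (fun i a => e a (x i) * e a (x' i))]
  simp_rw [he' he]
  by_cases h : x = x'
  · simp [h]
  · simp only [h, if_false]
    obtain ⟨i, hi⟩ := Function.ne_iff.mp h
    exact Finset.prod_eq_zero (Finset.mem_univ i) (by simp [hi])

variable {n : ℕ}

def glue (S : Finset (Fin n)) (u : {i // i ∈ S} → Fin q) (w : {i // i ∈ Sᶜ} → Fin q) :
    Fin n → Fin q := fun i =>
  if h : i ∈ S then u ⟨i, h⟩ else w ⟨i, by simpa using h⟩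

lemma restrict_glue_left (S : Finset (Fin n)) (u : {i // i ∈ S} → Fin q)
    (w : {i // i ∈ Sᶜ} → Fin q) : _root_.restrict (glue S u w) S = u := by
  funext i; simp [_root_.restrict, glue, i.2]

lemma restrict_glue_right (S : Finset (Fin n)) (u : {i // i ∈ S} → Fin q)
    (w : {i // i ∈ Sᶜ} → Fin q) : _root_.restrict (glue S u w) Sᶜ = w := by
  funext i
  have hi : i.1 ∉ S := Finset.mem_compl.mp i.2
  simp [_root_.restrict, glue, hi]

lemma glue_restrict (S : Finset (Fin n)) (x : Fin n → Fin q) :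
    glue S (_root_.restrict x S) (_root_.restrict x Sᶜ) = x := by
  funext i; by_cases h : i ∈ S <;> simp [glue, _root_.restrict, h]

lemma ehat_restrict_mul (S : Finset (Fin n)) (v z : Fin n → Fin q) :
    Ehat e (_root_.restrict v S) (_root_.restrict z S) * Ehat e (_root_.restrict v Sᶜ) (_root_.restrict z Sᶜ)
      = Ehat e v z := by
  rw [Ehat, Ehat, Ehat]
  simp only [_root_.restrict]
  rw [Finset.prod_coe_sort S (fun i => e (v i) (z i)),
    Finset.prod_coe_sort Sᶜ (fun i => e (v i) (z i))]
  exact Finset.prod_mul_prod_compl S _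

lemma sum_split (S : Finset (Fin n)) (P : Finset ({i // i ∈ S} → Fin q))
    (f : ({i // i ∈ S} → Fin q) → ({i // i ∈ Sᶜ} → Fin q) → ℝ) :
    ∑ x ∈ Finset.univ.filter (fun x : Fin n → Fin q => _root_.restrict x S ∈ P),
        f (_root_.restrict x S) (_root_.restrict x Sᶜ)
      = ∑ a ∈ P, ∑ b : {i // i ∈ Sᶜ} → Fin q, f a b := by
  rw [← Finset.sum_product']
  refine Finset.sum_nbij' (fun x => (_root_.restrict x S, _root_.restrict x Sᶜ))
    (fun p => glue S p.1 p.2) ?_ ?_ ?_ ?_ ?_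
  · intro x hx
    simp only [Finset.mem_filter] at hx
    simp [Finset.mem_product, hx.2]
  · intro p hp
    simp only [Finset.mem_product] at hp
    simp [Finset.mem_filter, restrict_glue_left, hp.1]
  · intro x hx; exact glue_restrict S x
  · intro p hp; simp [restrict_glue_left, restrict_glue_right]
  · intro x hx; rfl

lemma sum_split_univ (S : Finset (Fin n))
    (f : ({i // i ∈ S} → Fin q) → ({i // i ∈ Sᶜ} → Fin q) → ℝ) :
    ∑ x : Fin n → Fin q, f (_root_.restrict x S) (_root_.restrict x Sᶜ)
      = ∑ a : {i // i ∈ S} → Fin q, ∑ b : {i // i ∈ Sᶜ} → Fin q, f a b := by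
  have := sum_split S Finset.univ f
  simpa using this

end GP

namespace GP
section OA
variable {q : ℕ} [NeZero q] {ι : Type*} [Fintype ι] [DecidableEq ι]
variable {e : Fin q → Fin q → ℝ}


lemma sum_oa_restrict (hq : 2 ≤ q) {d : ℕ} {T : Finset (ι → Fin q)} (hT : IsOA d T)
    {D : Finset ι} (hD : D.card = d) (g : ({i // i ∈ D} → Fin q) → ℝ) :
    ∑ t ∈ T, g (fun j : {i // i ∈ D} => t j.1) = ∑ z : {i // i ∈ D} → Fin q, g z := by
  classical
  refine Finset.sum_nbij' (fun t => fun j : {i // i ∈ D} => t j.1)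
    (fun z => (hT.2 D hD (fun i => if h : i ∈ D then z ⟨i, h⟩ else 0)).choose) ?_ ?_ ?_ ?_ ?_
  · intro t ht; exact Finset.mem_univ _
  · intro z hz
    exact ((hT.2 D hD _).choose_spec.1).1
  · intro t ht
    have h := hT.2 D hD (fun i => if h : i ∈ D then t i else 0)
    exact (h.choose_spec.2 t ⟨ht, fun i hi => by simp [hi]⟩).symm
  · intro z hz
    funext j
    have h := ((hT.2 D hD (fun i => if h : i ∈ D then z ⟨i, h⟩ else 0)).choose_spec.1).2
    have := h j.1 j.2
    simpa [j.2] using this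
  · intro t ht; rfl

lemma oa_orth (hq : 2 ≤ q)
    (he : ∀ i j : Fin q, ∑ x, e i x * e j x = if i = j then 1 else 0)
    (he0 : ∀ x : Fin q, e 0 x = 1 / Real.sqrt q)
    {d : ℕ} {T : Finset (ι → Fin q)} (hT : IsOA d T)
    {D : Finset ι} (hD : D.card = d)
    (u u' : ι → Fin q) (hu : ∀ i, u i ≠ 0 → i ∈ D) (hu' : ∀ i, u' i ≠ 0 → i ∈ D) :
    ∑ t ∈ T, Ehat e u t * Ehat e u' t
      = (if u = u' then 1 else 0) * ((q : ℝ) ^ (Fintype.card ι - d))⁻¹ := by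
  have hq0 : (0 : ℝ) < q := by positivity
  have hsq : Real.sqrt q * Real.sqrt q = q := Real.mul_self_sqrt (le_of_lt hq0)
  -- pointwise split of the product
  have key : ∀ t : ι → Fin q, Ehat e u t * Ehat e u' t
      = (∏ j : {i // i ∈ D}, (e (u j.1) (t j.1) * e (u' j.1) (t j.1))) * ((q:ℝ)⁻¹) ^ (Dᶜ.card) := by
    intro t
    have h1 : Ehat e u t * Ehat e u' t = ∏ i, (e (u i) (t i) * e (u' i) (t i)) := by
      rw [Ehat, Ehat, ← Finset.prod_mul_distrib]
    rw [h1, ← Finset.prod_mul_prod_compl D (fun i => e (u i) (t i) * e (u' i) (t i))]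
    congr 1
    · exact (Finset.prod_coe_sort D _).symm
    · rw [← Finset.prod_const]
      refine Finset.prod_congr rfl fun i hi => ?_
      have hiD : i ∉ D := Finset.mem_compl.mp hi
      have hu0 : u i = 0 := by by_contra h; exact hiD (hu i h)
      have hu'0 : u' i = 0 := by by_contra h; exact hiD (hu' i h)
      rw [hu0, hu'0, he0]
      rw [div_mul_div_comm, one_mul, hsq, one_div]
  simp_rw [key]
  rw [← Finset.sum_mul]
  rw [sum_oa_restrict hq hT hD (fun z => ∏ j : {i // i ∈ D}, (e (u j.1) (z j) * e (u' j.1) (z j)))]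
  rw [← Fintype.prod_sum (fun (j : {i // i ∈ D}) a => e (u j.1) a * e (u' j.1) a)]
  simp_rw [he]
  have hDc : Dᶜ.card = Fintype.card ι - d := by rw [Finset.card_compl, hD]
  have hiff : (u = u') ↔ ∀ j : {i // i ∈ D}, u j.1 = u' j.1 := by
    constructor
    · intro h j; rw [h]
    · intro h; funext i
      by_cases hi : i ∈ D
      · exact h ⟨i, hi⟩
      · have h1 : u i = 0 := by by_contra hc; exact hi (hu i hc)
        have h2 : u' i = 0 := by by_contra hc; exact hi (hu' i hc)
        rw [h1, h2]
  by_cases h : u = u'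
  · have hall : ∀ j : {i // i ∈ D}, u j.1 = u' j.1 := hiff.mp h
    simp [h, hDc, inv_pow]
  · have hex : ∃ j : {i // i ∈ D}, u j.1 ≠ u' j.1 := by
      by_contra hc; push_neg at hc; exact h (hiff.mpr hc)
    obtain ⟨j, hj⟩ := hex
    rw [Finset.prod_eq_zero (Finset.mem_univ j) (by simp [hj])]
    simp [h]
end OA
end GP

namespace GP
lemma sq_sum_sum_le {γ β : Type*} (s : Finset γ) (t : Finset β) (h : γ → β → ℝ) :
    ∑ x ∈ t, (∑ D ∈ s, h D x) ^ 2
      ≤ (∑ D ∈ s, Real.sqrt (∑ x ∈ t, (h D x) ^ 2)) ^ 2 := by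
  have lhs : ∑ x ∈ t, (∑ D ∈ s, h D x) ^ 2
      = ∑ D ∈ s, ∑ D' ∈ s, ∑ x ∈ t, h D x * h D' x := by
    simp_rw [sq, Finset.sum_mul_sum]
    rw [Finset.sum_comm]
    refine Finset.sum_congr rfl fun D _ => Finset.sum_comm
  have rhs : (∑ D ∈ s, Real.sqrt (∑ x ∈ t, (h D x) ^ 2)) ^ 2
      = ∑ D ∈ s, ∑ D' ∈ s, Real.sqrt (∑ x ∈ t, (h D x) ^ 2) * Real.sqrt (∑ x ∈ t, (h D' x) ^ 2) := by
    rw [sq, Finset.sum_mul_sum]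
  rw [lhs, rhs]
  refine Finset.sum_le_sum fun D _ => Finset.sum_le_sum fun D' _ => ?_
  exact Real.sum_mul_le_sqrt_mul_sqrt t _ _
end GP

namespace GP
lemma orthExpand {κ β : Type*} [DecidableEq κ] (A : Finset κ) (t : Finset β)
    (φ : κ → β → ℝ) (r : ℝ)
    (hφ : ∀ p ∈ A, ∀ p' ∈ A, ∑ b ∈ t, φ p b * φ p' b = if p = p' then r else 0)
    (βc : κ → ℝ) :
    ∑ b ∈ t, (∑ p ∈ A, βc p * φ p b) ^ 2 = r * ∑ p ∈ A, (βc p) ^ 2 := by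
  have h1 : ∀ b, (∑ p ∈ A, βc p * φ p b) ^ 2
      = ∑ p ∈ A, ∑ p' ∈ A, (βc p * βc p') * (φ p b * φ p' b) := by
    intro b
    rw [sq, Finset.sum_mul_sum]
    exact Finset.sum_congr rfl fun p _ => Finset.sum_congr rfl fun p' _ => by ring
  simp_rw [h1]
  rw [Finset.sum_comm]
  have h2 : ∀ p ∈ A, ∑ b ∈ t, ∑ p' ∈ A, (βc p * βc p') * (φ p b * φ p' b)
      = (βc p)^2 * r := by
    intro p hp
    rw [Finset.sum_comm]
    have h3 : ∀ p' ∈ A, ∑ b ∈ t, (βc p * βc p') * (φ p b * φ p' b)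
        = if p = p' then (βc p)^2 * r else 0 := by
      intro p' hp'
      rw [← Finset.mul_sum, hφ p hp p' hp']
      by_cases h : p = p'
      · subst h; simp [sq]
      · simp [h]
    rw [Finset.sum_congr rfl h3, Finset.sum_ite_eq A p (fun _ => (βc p)^2 * r), if_pos hp]
  rw [Finset.sum_congr rfl h2, ← Finset.sum_mul]
  ring
end GP

namespace GP
variable {q : ℕ} [NeZero q]

lemma perS {n k d : ℕ} (hq : 2 ≤ q) {e : Fin q → Fin q → ℝ}
    (he : ∀ i j : Fin q, ∑ x, e i x * e j x = if i = j then 1 else 0)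
    (he0 : ∀ x : Fin q, e 0 x = 1 / Real.sqrt q)
    {S : Finset (Fin n)} (hS : S.card = k) (hd : d ≤ k) (hkn : k ≤ n)
    (Tset : Finset ({i // i ∈ S} → Fin q)) (hT : IsOA d Tset)
    (α : ℕ → ℝ) (M : ℝ) (hM0 : 0 ≤ M) (hM : ∀ m, m ≤ n - k → |α m| ≤ M)
    (c : (Fin n → Fin q) → ℝ) :
    ∑ x ∈ Finset.univ.filter (fun x : Fin n → Fin q => _root_.restrict x S ∈ Tset),
      (Real.sqrt ((q:ℝ) ^ (k - d)) *
        ∑ u ∈ Finset.univ.filter (fun u : {i // i ∈ S} → Fin q => wt u ≤ d),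
          ∑ w : {i // i ∈ Sᶜ} → Fin q,
            (α (wt w) * c (glue S u w)) * (Ehat e u (_root_.restrict x S) * Ehat e w (_root_.restrict x Sᶜ))) ^ 2
      ≤ ((k.choose d : ℝ) * M) ^ 2 * ∑ v : Fin n → Fin q, c v ^ 2 := by
  classical
  have hq0 : (0 : ℝ) < q := by positivity
  have hQpos : (0:ℝ) < (q:ℝ) ^ (k - d) := by positivity
  have hcard1 : Fintype.card {i // i ∈ S} = k := by rw [Fintype.card_coe, hS]
  have hcard2 : Fintype.card {i // i ∈ Sᶜ} = n - k := by
    rw [Fintype.card_coe, Finset.card_compl, hS, Fintype.card_fin]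
  -- choice of a d-set containing the support of each u
  have hsel : ∀ u : {i // i ∈ S} → Fin q, ∃ D : Finset {i // i ∈ S},
      wt u ≤ d → (D.card = d ∧ ∀ i, u i ≠ 0 → i ∈ D) := by
    intro u
    by_cases h : wt u ≤ d
    · obtain ⟨D, hsub, -, hcard⟩ := Finset.exists_subsuperset_card_eq
        (Finset.subset_univ (Finset.univ.filter fun i => (u i).val ≠ 0))
        (h.trans_eq rfl) (by rw [Finset.card_univ, hcard1]; exact hd)
      refine ⟨D, fun _ => ⟨hcard, fun i hi => hsub ?_⟩⟩
      simp only [Finset.mem_filter, Finset.mem_univ, true_and]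
      intro h; apply hi; ext; simp [h]
    · exact ⟨∅, fun hc => absurd hc h⟩
  choose Dsel hDsel using hsel
  set Ud := Finset.univ.filter (fun u : {i // i ∈ S} → Fin q => wt u ≤ d) with hUd
  set 𝒟 := Finset.powersetCard d (Finset.univ : Finset {i // i ∈ S}) with h𝒟
  have hwtUd : ∀ u ∈ Ud, wt u ≤ d := fun u hu => (Finset.mem_filter.mp hu).2
  have hmaps : ∀ u ∈ Ud, Dsel u ∈ 𝒟 := by
    intro u hu
    rw [h𝒟, Finset.mem_powersetCard]
    exact ⟨Finset.subset_univ _, (hDsel u (hwtUd u hu)).1⟩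
  -- fiberwise decomposition of the u-sum
  have hsplit : ∀ x : Fin n → Fin q,
      Real.sqrt ((q:ℝ) ^ (k - d)) *
        ∑ u ∈ Ud, ∑ w : {i // i ∈ Sᶜ} → Fin q,
          (α (wt w) * c (glue S u w)) * (Ehat e u (_root_.restrict x S) * Ehat e w (_root_.restrict x Sᶜ))
      = ∑ D ∈ 𝒟, (Real.sqrt ((q:ℝ) ^ (k - d)) *
          ∑ u ∈ Ud.filter (fun u => Dsel u = D), ∑ w : {i // i ∈ Sᶜ} → Fin q,
            (α (wt w) * c (glue S u w)) * (Ehat e u (_root_.restrict x S) * Ehat e w (_root_.restrict x Sᶜ))) := by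
    intro x
    rw [← Finset.mul_sum]
    congr 1
    exact (Finset.sum_fiberwise_of_maps_to hmaps _).symm
  simp_rw [hsplit]
  set t := Finset.univ.filter (fun x : Fin n → Fin q => _root_.restrict x S ∈ Tset) with ht
  set H := fun (D : Finset {i // i ∈ S}) (x : Fin n → Fin q) =>
    Real.sqrt ((q:ℝ) ^ (k - d)) *
      ∑ u ∈ Ud.filter (fun u => Dsel u = D), ∑ w : {i // i ∈ Sᶜ} → Fin q,
        (α (wt w) * c (glue S u w)) * (Ehat e u (_root_.restrict x S) * Ehat e w (_root_.restrict x Sᶜ))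
    with hH
  have step1 : ∑ x ∈ t, (∑ D ∈ 𝒟, H D x) ^ 2
      ≤ (∑ D ∈ 𝒟, Real.sqrt (∑ x ∈ t, (H D x) ^ 2)) ^ 2 := sq_sum_sum_le 𝒟 t H
  refine le_trans step1 ?_
  have hc2 : (0:ℝ) ≤ ∑ v : Fin n → Fin q, c v ^ 2 := by positivity
  -- per D bound
  have perD : ∀ D ∈ 𝒟, ∑ x ∈ t, (H D x) ^ 2 ≤ M ^ 2 * ∑ v : Fin n → Fin q, c v ^ 2 := by
    intro D hD
    have hDcard : D.card = d := (Finset.mem_powersetCard.mp hD).2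
    set cls := Ud.filter (fun u => Dsel u = D) with hcls
    -- squared formula
    have e1 : ∀ x, (H D x) ^ 2 = ((q:ℝ) ^ (k - d)) *
        (∑ u ∈ cls, ∑ w : {i // i ∈ Sᶜ} → Fin q,
          (α (wt w) * c (glue S u w)) * (Ehat e u (_root_.restrict x S) * Ehat e w (_root_.restrict x Sᶜ))) ^ 2 := by
      intro x
      rw [hH, mul_pow, Real.sq_sqrt hQpos.le]
    simp_rw [e1]
    rw [← Finset.mul_sum]
    have e2 : ∑ x ∈ t,
        (∑ u ∈ cls, ∑ w : {i // i ∈ Sᶜ} → Fin q,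
          (α (wt w) * c (glue S u w)) * (Ehat e u (_root_.restrict x S) * Ehat e w (_root_.restrict x Sᶜ))) ^ 2
        = ∑ a ∈ Tset, ∑ b : {i // i ∈ Sᶜ} → Fin q,
          (∑ u ∈ cls, ∑ w : {i // i ∈ Sᶜ} → Fin q,
            (α (wt w) * c (glue S u w)) * (Ehat e u a * Ehat e w b)) ^ 2 := by
      rw [ht]
      exact sum_split S Tset (fun a b =>
        (∑ u ∈ cls, ∑ w : {i // i ∈ Sᶜ} → Fin q,
          (α (wt w) * c (glue S u w)) * (Ehat e u a * Ehat e w b)) ^ 2)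
    rw [e2]
    -- rewrite as product-indexed sums and apply orthExpand
    have e3 : ∑ a ∈ Tset, ∑ b : {i // i ∈ Sᶜ} → Fin q,
          (∑ u ∈ cls, ∑ w : {i // i ∈ Sᶜ} → Fin q,
            (α (wt w) * c (glue S u w)) * (Ehat e u a * Ehat e w b)) ^ 2
        = ∑ ab ∈ Tset ×ˢ (Finset.univ : Finset ({i // i ∈ Sᶜ} → Fin q)),
          (∑ p ∈ cls ×ˢ (Finset.univ : Finset ({i // i ∈ Sᶜ} → Fin q)),
            (α (wt p.2) * c (glue S p.1 p.2)) * (Ehat e p.1 ab.1 * Ehat e p.2 ab.2)) ^ 2 := by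
      rw [Finset.sum_product]
      refine Finset.sum_congr rfl fun a _ => Finset.sum_congr rfl fun b _ => ?_
      rw [Finset.sum_product]
    rw [e3]
    have hφ : ∀ p ∈ cls ×ˢ (Finset.univ : Finset ({i // i ∈ Sᶜ} → Fin q)),
        ∀ p' ∈ cls ×ˢ (Finset.univ : Finset ({i // i ∈ Sᶜ} → Fin q)),
        ∑ ab ∈ Tset ×ˢ (Finset.univ : Finset ({i // i ∈ Sᶜ} → Fin q)),
          (Ehat e p.1 ab.1 * Ehat e p.2 ab.2) * (Ehat e p'.1 ab.1 * Ehat e p'.2 ab.2)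
        = if p = p' then ((q:ℝ) ^ (k - d))⁻¹ else 0 := by
      intro p hp p' hp'
      have hp1 := Finset.mem_filter.mp (Finset.mem_product.mp hp).1
      have hp'1 := Finset.mem_filter.mp (Finset.mem_product.mp hp').1
      have hsupp : ∀ i, p.1 i ≠ 0 → i ∈ D := by
        have h := (hDsel p.1 (hwtUd p.1 hp1.1)).2
        rwa [hp1.2] at h
      have hsupp' : ∀ i, p'.1 i ≠ 0 → i ∈ D := by
        have h := (hDsel p'.1 (hwtUd p'.1 hp'1.1)).2
        rwa [hp'1.2] at h
      have e4 : ∑ ab ∈ Tset ×ˢ (Finset.univ : Finset ({i // i ∈ Sᶜ} → Fin q)),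
          (Ehat e p.1 ab.1 * Ehat e p.2 ab.2) * (Ehat e p'.1 ab.1 * Ehat e p'.2 ab.2)
          = (∑ a ∈ Tset, Ehat e p.1 a * Ehat e p'.1 a) *
            (∑ b : {i // i ∈ Sᶜ} → Fin q, Ehat e p.2 b * Ehat e p'.2 b) := by
        rw [Finset.sum_product, Finset.sum_mul]
        refine Finset.sum_congr rfl fun a _ => ?_
        rw [Finset.mul_sum]
        exact Finset.sum_congr rfl fun b _ => by ring
      rw [e4, oa_orth hq he he0 hT hDcard p.1 p'.1 hsupp hsupp', sum_ehat_mul_ehat he p.2 p'.2,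
        hcard1]
      by_cases h : p = p'
      · rw [h]; simp
      · rcases Prod.mk.injEq p.1 p.2 p'.1 p'.2 with _
        have : p.1 ≠ p'.1 ∨ p.2 ≠ p'.2 := by
          by_contra hc; push_neg at hc
          exact h (Prod.ext hc.1 hc.2)
        rcases this with h1 | h2
        · simp [h1, h]
        · simp [h2, h]
    rw [orthExpand _ _ _ _ hφ _]
    rw [← mul_assoc, mul_inv_cancel₀ (ne_of_gt hQpos), one_mul]
    -- bound the coefficients
    have bound1 : ∑ p ∈ cls ×ˢ (Finset.univ : Finset ({i // i ∈ Sᶜ} → Fin q)),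
        (α (wt p.2) * c (glue S p.1 p.2)) ^ 2
        ≤ M ^ 2 * ∑ p ∈ cls ×ˢ (Finset.univ : Finset ({i // i ∈ Sᶜ} → Fin q)),
            (c (glue S p.1 p.2)) ^ 2 := by
      rw [Finset.mul_sum]
      refine Finset.sum_le_sum fun p _ => ?_
      rw [mul_pow]
      refine mul_le_mul_of_nonneg_right ?_ (sq_nonneg _)
      have hwt : wt p.2 ≤ n - k := by
        rw [← hcard2, ← Finset.card_univ]
        exact Finset.card_filter_le _ _
      calc (α (wt p.2)) ^ 2 = |α (wt p.2)| ^ 2 := (sq_abs _).symm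
        _ ≤ M ^ 2 := by
            refine pow_le_pow_left₀ (abs_nonneg _) (hM _ hwt) 2
    refine le_trans bound1 ?_
    refine mul_le_mul_of_nonneg_left ?_ (sq_nonneg M)
    have e5 : ∑ p ∈ (Finset.univ : Finset (({i // i ∈ S} → Fin q) × ({i // i ∈ Sᶜ} → Fin q))),
        (c (glue S p.1 p.2)) ^ 2 = ∑ v : Fin n → Fin q, c v ^ 2 := by
      rw [Fintype.sum_prod_type]
      rw [← sum_split_univ S (fun a b => c (glue S a b) ^ 2)]
      refine Finset.sum_congr rfl fun x _ => by rw [glue_restrict]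
    rw [← e5]
    refine Finset.sum_le_sum_of_subset_of_nonneg (Finset.subset_univ _) fun _ _ _ => sq_nonneg _
  -- assemble
  have step2 : ∑ D ∈ 𝒟, Real.sqrt (∑ x ∈ t, (H D x) ^ 2)
      ≤ (k.choose d : ℝ) * (M * Real.sqrt (∑ v : Fin n → Fin q, c v ^ 2)) := by
    have hcard𝒟 : 𝒟.card = k.choose d := by
      rw [h𝒟, Finset.card_powersetCard, Finset.card_univ, hcard1]
    calc ∑ D ∈ 𝒟, Real.sqrt (∑ x ∈ t, (H D x) ^ 2)
        ≤ ∑ _D ∈ 𝒟, M * Real.sqrt (∑ v : Fin n → Fin q, c v ^ 2) := by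
          refine Finset.sum_le_sum fun D hD => ?_
          have := Real.sqrt_le_sqrt (perD D hD)
          refine le_trans this ?_
          rw [Real.sqrt_mul (sq_nonneg M), Real.sqrt_sq hM0]
      _ = (k.choose d : ℝ) * (M * Real.sqrt (∑ v : Fin n → Fin q, c v ^ 2)) := by
          rw [Finset.sum_const, hcard𝒟, nsmul_eq_mul]
  have hnn : (0:ℝ) ≤ ∑ D ∈ 𝒟, Real.sqrt (∑ x ∈ t, (H D x) ^ 2) :=
    Finset.sum_nonneg fun D _ => Real.sqrt_nonneg _
  calc (∑ D ∈ 𝒟, Real.sqrt (∑ x ∈ t, (H D x) ^ 2)) ^ 2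
      ≤ ((k.choose d : ℝ) * (M * Real.sqrt (∑ v : Fin n → Fin q, c v ^ 2))) ^ 2 :=
        pow_le_pow_left₀ hnn step2 2
    _ = ((k.choose d : ℝ) * M) ^ 2 * ∑ v : Fin n → Fin q, c v ^ 2 := by
        rw [mul_pow, mul_pow, Real.sq_sqrt hc2]; ring
end GP

namespace GP
variable {q : ℕ} [NeZero q]

lemma ehat_glue {n : ℕ} {e : Fin q → Fin q → ℝ} (S : Finset (Fin n))
    (u : {i // i ∈ S} → Fin q) (w : {i // i ∈ Sᶜ} → Fin q) (z : Fin n → Fin q) :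
    Ehat e u (_root_.restrict z S) * Ehat e w (_root_.restrict z Sᶜ)
      = Ehat e (glue S u w) z := by
  have h1 := ehat_restrict_mul (e := e) S (glue S u w) z
  rw [restrict_glue_left, restrict_glue_right] at h1
  exact h1

lemma sum_Eproj_le {ι : Type*} [Fintype ι] [DecidableEq ι] {e : Fin q → Fin q → ℝ}
    (d : ℕ) (a b : ι → Fin q) :
    ∑ j ∈ Finset.range (d + 1), Eproj e j a b
      = ∑ u ∈ Finset.univ.filter (fun u : ι → Fin q => wt u ≤ d), Ehat e u a * Ehat e u b := by
  rw [← Finset.sum_fiberwise_of_maps_to (g := wt)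
    (fun u hu => Finset.mem_range_succ_iff.mpr (Finset.mem_filter.mp hu).2)
    (fun u => Ehat e u a * Ehat e u b)]
  refine Finset.sum_congr rfl fun j hj => ?_
  have hj' : j ≤ d := Finset.mem_range_succ_iff.mp hj
  rw [Eproj_eq]
  refine (Finset.sum_congr ?_ fun _ _ => rfl)
  rw [Finset.filter_filter]
  refine Finset.filter_congr fun u _ => ?_
  constructor
  · intro h; exact ⟨h.trans_le hj', h⟩
  · intro h; exact h.2

lemma sum_Eproj_wt {ι : Type*} [Fintype ι] [DecidableEq ι] {e : Fin q → Fin q → ℝ}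
    {N : ℕ} (hN : Fintype.card ι ≤ N) (β : ℕ → ℝ) (a b : ι → Fin q) :
    ∑ m ∈ Finset.range (N + 1), β m * Eproj e m a b
      = ∑ w : ι → Fin q, β (wt w) * (Ehat e w a * Ehat e w b) := by
  have hwt : ∀ w : ι → Fin q, wt w ≤ N := by
    intro w
    refine le_trans ?_ hN
    rw [← Finset.card_univ]
    exact Finset.card_filter_le _ _
  rw [← Finset.sum_fiberwise_of_maps_to (g := wt)
    (fun w _ => Finset.mem_range_succ_iff.mpr (hwt w))
    (fun w => β (wt w) * (Ehat e w a * Ehat e w b))]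
  refine Finset.sum_congr rfl fun m hm => ?_
  rw [Eproj_eq, Finset.mul_sum]
  refine Finset.sum_congr (by simp) fun w hw => ?_
  have : wt w = m := by simpa using (Finset.mem_filter.mp hw).2
  rw [this]
end GP

namespace GP
lemma gam_dot {q n k d : ℕ} [NeZero q] (hkn : k ≤ n)
    (T : (S : Finset (Fin n)) → Finset ({i // i ∈ S} → Fin q))
    (e : Fin q → Fin q → ℝ) (α : ℕ → ℝ)
    (p : Rows q n k T) (y : (Fin n → Fin q) → ℝ) :
    ∑ z : Fin n → Fin q, Gam k d T e α p z * y z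
      = Real.sqrt ((q:ℝ) ^ (k - d)) *
          ∑ u ∈ Finset.univ.filter (fun u : {i // i ∈ p.1.2} → Fin q => wt u ≤ d),
            ∑ w : {i // i ∈ p.1.2ᶜ} → Fin q,
              (α (wt w) * (∑ z : Fin n → Fin q, Ehat e (glue p.1.2 u w) z * y z)) *
                (Ehat e u (_root_.restrict p.1.1 p.1.2) *
                  Ehat e w (_root_.restrict p.1.1 p.1.2ᶜ)) := by
  classical
  set S := p.1.2 with hSdef
  set x := p.1.1 with hxdef
  have hS : S.card = k := p.2.1
  have hcard2 : Fintype.card {i // i ∈ Sᶜ} = n - k := by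
    rw [Fintype.card_coe, Finset.card_compl, hS, Fintype.card_fin]
  set Ud := Finset.univ.filter (fun u : {i // i ∈ S} → Fin q => wt u ≤ d) with hUd
  have A0 : ∀ z, Gam k d T e α p z
      = Real.sqrt ((q:ℝ) ^ (k - d)) *
          ((∑ u ∈ Ud, Ehat e u (_root_.restrict x S) * Ehat e u (_root_.restrict z S)) *
            (∑ w : {i // i ∈ Sᶜ} → Fin q,
              α (wt w) * (Ehat e w (_root_.restrict x Sᶜ) * Ehat e w (_root_.restrict z Sᶜ)))) := by
    intro z
    show ∑ m ∈ Finset.range (n - k + 1),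
        α m * (Real.sqrt ((q : ℝ) ^ (k - d)) *
          ∑ j ∈ Finset.range (d + 1), Eproj e j (_root_.restrict x S) (_root_.restrict z S)) *
          Eproj e m (_root_.restrict x Sᶜ) (_root_.restrict z Sᶜ) = _
    rw [sum_Eproj_le d]
    rw [← sum_Eproj_wt (le_of_eq hcard2) α (_root_.restrict x Sᶜ) (_root_.restrict z Sᶜ)]
    conv_rhs => rw [Finset.mul_sum, Finset.mul_sum]
    exact Finset.sum_congr rfl fun m _ => by ring
  have A1 : ∀ z, Gam k d T e α p z * y z
      = ∑ u ∈ Ud, ∑ w : {i // i ∈ Sᶜ} → Fin q,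
          (Real.sqrt ((q:ℝ) ^ (k - d)) * α (wt w) *
            (Ehat e u (_root_.restrict x S) * Ehat e w (_root_.restrict x Sᶜ))) *
            (Ehat e (glue S u w) z * y z) := by
    intro z
    rw [A0 z]
    rw [Finset.sum_mul_sum]
    simp only [Finset.mul_sum, Finset.sum_mul]
    refine Finset.sum_congr rfl fun u _ => Finset.sum_congr rfl fun w _ => ?_
    rw [← ehat_glue S u w z]
    ring
  simp_rw [A1]
  rw [Finset.sum_comm]
  simp only [Finset.mul_sum]
  refine Finset.sum_congr rfl fun u _ => ?_
  rw [Finset.sum_comm]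
  refine Finset.sum_congr rfl fun w _ => ?_
  simp_rw [← Finset.mul_sum]
  ring
end GP

namespace GP
lemma parseval {q : ℕ} [NeZero q] {ι : Type*} [Fintype ι] [DecidableEq ι]
    {e : Fin q → Fin q → ℝ}
    (he : ∀ i j : Fin q, ∑ x, e i x * e j x = if i = j then 1 else 0)
    (y : (ι → Fin q) → ℝ) :
    ∑ v : ι → Fin q, (∑ z : ι → Fin q, Ehat e v z * y z) ^ 2
      = ∑ z : ι → Fin q, (y z) ^ 2 := by
  have h := orthExpand (Finset.univ : Finset (ι → Fin q)) (Finset.univ : Finset (ι → Fin q))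
    (fun z v => Ehat e v z) 1
    (fun z _ z' _ => by simpa using sum_ehat_mul_ehat' he z z') y
  simp only [one_mul] at h
  rw [← h]
  refine Finset.sum_congr rfl fun v _ => ?_
  congr 1
  exact Finset.sum_congr rfl fun z _ => by ring
end GP


open GP

/-- Lemma 2(b) of the paper: in the setting of the adversary-matrix
construction, `‖Γ̃‖ ≤ C(k,d) · √(C(n,k)) · max_{0 ≤ m ≤ n-k} |α_m|`. -/
theorem gamma_norm_upper_bound
    {q n k d : ℕ} [NeZero q] (hq : 2 ≤ q) (hk : 1 ≤ k) (hd : d + 1 ≤ k) (hn : k ≤ n)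
    (e : Fin q → Fin q → ℝ)
    (he : ∀ i j : Fin q, ∑ x, e i x * e j x = if i = j then 1 else 0)
    (he0 : ∀ x : Fin q, e 0 x = 1 / Real.sqrt q)
    (T : (S : Finset (Fin n)) → Finset ({i // i ∈ S} → Fin q))
    (hT : ∀ S : Finset (Fin n), S.card = k → IsOA d (T S))
    (α : ℕ → ℝ) :
    specNorm (Gam k d T e α) ≤
      (k.choose d : ℝ) * Real.sqrt (n.choose k) *
        (Finset.range (n - k + 1)).sup' Finset.nonempty_range_add_one (fun m => |α m|) := by
  classical
  set M := (Finset.range (n - k + 1)).sup' Finset.nonempty_range_add_one (fun m => |α m|) with hMdef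
  have hMle : ∀ m, m ≤ n - k → |α m| ≤ M := fun m hm =>
    Finset.le_sup' (fun m => |α m|) (Finset.mem_range_succ_iff.mpr hm)
  have hM0 : 0 ≤ M := le_trans (abs_nonneg (α 0)) (hMle 0 (Nat.zero_le _))
  have hC0 : (0:ℝ) ≤ (k.choose d : ℝ) * Real.sqrt (n.choose k) * M := by positivity
  rw [specNorm]
  refine ContinuousLinearMap.opNorm_le_bound _ hC0 ?_
  intro y
  rw [LinearMap.coe_toContinuousLinearMap']
  set Y : (Fin n → Fin q) → ℝ := fun z => y z with hYdef
  set c : (Fin n → Fin q) → ℝ := fun v => ∑ z : Fin n → Fin q, Ehat e v z * Y z with hcdef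
  have hc2 : (0:ℝ) ≤ ∑ v : Fin n → Fin q, c v ^ 2 := by positivity
  -- the norms as sqrt of sums of squares
  have hnormy : ‖y‖ = Real.sqrt (∑ z : Fin n → Fin q, (Y z) ^ 2) := by
    rw [EuclideanSpace.norm_eq]
    congr 1
    exact Finset.sum_congr rfl fun z _ => by rw [Real.norm_eq_abs, sq_abs]
  have happly : ∀ p : Rows q n k T, (Matrix.toEuclideanLin (Gam k d T e α) y) p
      = ∑ z : Fin n → Fin q, Gam k d T e α p z * Y z := fun p => rfl
  have hnormL : ‖Matrix.toEuclideanLin (Gam k d T e α) y‖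
      = Real.sqrt (∑ p : Rows q n k T, (∑ z : Fin n → Fin q, Gam k d T e α p z * Y z) ^ 2) := by
    rw [EuclideanSpace.norm_eq]
    congr 1
    refine Finset.sum_congr rfl fun p _ => ?_
    rw [Real.norm_eq_abs, sq_abs, happly p]
  rw [hnormL, hnormy]
  -- main quadratic bound
  have main : ∑ p : Rows q n k T, (∑ z : Fin n → Fin q, Gam k d T e α p z * Y z) ^ 2
      ≤ (n.choose k : ℝ) * (((k.choose d : ℝ) * M) ^ 2 * ∑ v : Fin n → Fin q, c v ^ 2) := by
    -- rewrite each row via gam_dot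
    have hrow : ∀ p : Rows q n k T, (∑ z : Fin n → Fin q, Gam k d T e α p z * Y z) ^ 2
        = (fun r : (Fin n → Fin q) × Finset (Fin n) =>
            (Real.sqrt ((q:ℝ) ^ (k - d)) *
              ∑ u ∈ Finset.univ.filter (fun u : {i // i ∈ r.2} → Fin q => wt u ≤ d),
                ∑ w : {i // i ∈ r.2ᶜ} → Fin q,
                  (α (wt w) * c (glue r.2 u w)) *
                    (Ehat e u (_root_.restrict r.1 r.2) * Ehat e w (_root_.restrict r.1 r.2ᶜ))) ^ 2) p.1 := by
      intro p
      rw [gam_dot hn T e α p Y]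
    simp_rw [hrow]
    set F : (Fin n → Fin q) × Finset (Fin n) → ℝ := fun r =>
      (Real.sqrt ((q:ℝ) ^ (k - d)) *
        ∑ u ∈ Finset.univ.filter (fun u : {i // i ∈ r.2} → Fin q => wt u ≤ d),
          ∑ w : {i // i ∈ r.2ᶜ} → Fin q,
            (α (wt w) * c (glue r.2 u w)) *
              (Ehat e u (_root_.restrict r.1 r.2) * Ehat e w (_root_.restrict r.1 r.2ᶜ))) ^ 2 with hF
    -- sum over the subtype = sum over the filtered product
    have hsubty : ∑ p : Rows q n k T, F p.1
        = ∑ r ∈ Finset.univ.filter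
            (fun r : (Fin n → Fin q) × Finset (Fin n) =>
              r.2.card = k ∧ _root_.restrict r.1 r.2 ∈ T r.2), F r := by
      exact (Finset.sum_subtype
        (p := fun r : (Fin n → Fin q) × Finset (Fin n) =>
          r.2.card = k ∧ _root_.restrict r.1 r.2 ∈ T r.2)
        (Finset.univ.filter fun r : (Fin n → Fin q) × Finset (Fin n) =>
          r.2.card = k ∧ _root_.restrict r.1 r.2 ∈ T r.2)
        (fun r => by simp) F).symm
    rw [hsubty, Finset.sum_filter]
    rw [Fintype.sum_prod_type]
    rw [Finset.sum_comm]
    have hSsum : ∀ S : Finset (Fin n),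
        ∑ x : Fin n → Fin q,
          (if S.card = k ∧ _root_.restrict x S ∈ T S then F (x, S) else 0)
        ≤ (if S.card = k then 1 else 0) *
            (((k.choose d : ℝ) * M) ^ 2 * ∑ v : Fin n → Fin q, c v ^ 2) := by
      intro S
      by_cases hSk : S.card = k
      · simp only [hSk, true_and, if_true, one_mul]
        have e1 : ∑ x : Fin n → Fin q, (if _root_.restrict x S ∈ T S then F (x, S) else 0)
            = ∑ x ∈ Finset.univ.filter (fun x : Fin n → Fin q => _root_.restrict x S ∈ T S),
                F (x, S) := (Finset.sum_filter _ _).symm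
        rw [e1]
        exact perS hq he he0 hSk (by omega) hn (T S) (hT S hSk) α M hM0 hMle c
      · simp [hSk]
    calc ∑ S : Finset (Fin n), ∑ x : Fin n → Fin q,
          (if S.card = k ∧ _root_.restrict x S ∈ T S then F (x, S) else 0)
        ≤ ∑ S : Finset (Fin n), (if S.card = k then 1 else 0) *
            (((k.choose d : ℝ) * M) ^ 2 * ∑ v : Fin n → Fin q, c v ^ 2) :=
          Finset.sum_le_sum fun S _ => hSsum S
      _ = (n.choose k : ℝ) * (((k.choose d : ℝ) * M) ^ 2 * ∑ v : Fin n → Fin q, c v ^ 2) := by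
          rw [← Finset.sum_mul]
          congr 1
          rw [Finset.sum_boole]
          have hft : (Finset.univ.filter fun S : Finset (Fin n) => S.card = k)
              = Finset.powersetCard k Finset.univ := by
            rw [Finset.powersetCard_eq_filter, Finset.powerset_univ]
          rw [hft, Finset.card_powersetCard, Finset.card_univ, Fintype.card_fin]
  -- conclude
  have ht0 : (0:ℝ) ≤ ∑ z : Fin n → Fin q, (Y z) ^ 2 := by positivity
  have hpars : ∑ v : Fin n → Fin q, c v ^ 2 = ∑ z : Fin n → Fin q, (Y z) ^ 2 := by
    rw [hcdef]
    exact parseval he Y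
  calc Real.sqrt (∑ p : Rows q n k T, (∑ z : Fin n → Fin q, Gam k d T e α p z * Y z) ^ 2)
      ≤ Real.sqrt ((n.choose k : ℝ) *
          (((k.choose d : ℝ) * M) ^ 2 * ∑ v : Fin n → Fin q, c v ^ 2)) :=
        Real.sqrt_le_sqrt main
    _ = (k.choose d : ℝ) * Real.sqrt (n.choose k) * M *
          Real.sqrt (∑ z : Fin n → Fin q, (Y z) ^ 2) := by
        rw [hpars, Real.sqrt_mul (Nat.cast_nonneg _),
          Real.sqrt_mul (sq_nonneg ((k.choose d : ℝ) * M)),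
          Real.sqrt_sq (by positivity : (0:ℝ) ≤ (k.choose d : ℝ) * M)]
        ring
end

section
/- In the setting of the adversary-matrix construction with the modified matrix Γ̃_1, for arbitrary real coefficients α_0, …, α_{n−k} (with α_{n−k+1} := 0), the matrices Γ̃ and Γ̃_1 agree on every entry whose row label (x,S) (with x_S ∈ T_S) and column label y ∈ X^n satisfy x_1 ≠ y_1. -/
open scoped BigOperators

/-- The modified matrix `Γ̃₁`, the stacking of the blocks `(G̃_S)₁`: for `i₀ ∈ S`,
`(G̃_S)₁ = Σ_m α_m (F_S)₁ ⊗ E^{(n-k)}_m` where `(F_S)₁` is `q^{(k-d)/2}` times the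
`T_S`-row submatrix of `E_0 ⊗ E^{(k-1)}_d` (with `E_0 = e₀e₀*` on coordinate `i₀`);
for `i₀ ∉ S`, `(G̃_S)₁ = Σ_m (α_m - α_{m+1}) F_S ⊗ E_0 ⊗ E^{(n-k-1)}_m`. -/
noncomputable def Gam1 {q n : ℕ} [NeZero q] (k d : ℕ) (i₀ : Fin n)
    (T : (S : Finset (Fin n)) → Finset ({i // i ∈ S} → Fin q))
    (e : Fin q → Fin q → ℝ) (α : ℕ → ℝ) :
    Matrix (Rows q n k T) (Fin n → Fin q) ℝ :=
  fun p y =>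
    if i₀ ∈ p.1.2 then
      ∑ m ∈ Finset.range (n - k + 1),
        α m *
          (Real.sqrt ((q : ℝ) ^ (k - d)) * (e 0 (p.1.1 i₀) * e 0 (y i₀)) *
            Eproj e d (restrict p.1.1 (p.1.2.erase i₀)) (restrict y (p.1.2.erase i₀))) *
          Eproj e m (restrict p.1.1 p.1.2ᶜ) (restrict y p.1.2ᶜ)
    else
      ∑ m ∈ Finset.range (n - k + 1),
        (α m - α (m + 1)) *
          (Real.sqrt ((q : ℝ) ^ (k - d)) *
            ∑ j ∈ Finset.range (d + 1), Eproj e j (restrict p.1.1 p.1.2) (restrict y p.1.2)) *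
          ((e 0 (p.1.1 i₀) * e 0 (y i₀)) *
            Eproj e m (restrict p.1.1 (insert i₀ p.1.2)ᶜ) (restrict y (insert i₀ p.1.2)ᶜ))

section Aux

variable {q : ℕ} {ι ι' : Type*} [Fintype ι] [DecidableEq ι] [Fintype ι'] [DecidableEq ι']

omit [DecidableEq ι] [DecidableEq ι'] in
lemma wt_comp (σ : ι' ≃ ι) (v : ι → Fin q) : wt (fun i' => v (σ i')) = wt v := by
  unfold wt
  rw [Finset.card_filter, Finset.card_filter]
  exact Equiv.sum_comp σ (fun i => if (v i).val ≠ 0 then 1 else 0)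

omit [DecidableEq ι'] in
lemma wt_split (a : ι) (v : ι → Fin q) :
    wt v = (if (v a).val ≠ 0 then 1 else 0) + wt (fun i : {i // i ≠ a} => v i) := by
  unfold wt
  rw [Finset.card_filter, Finset.card_filter,
    ← Finset.sum_subtype (Finset.univ.erase a) (by simp)
      (fun i => if (v i).val ≠ 0 then 1 else 0)]
  exact (Finset.add_sum_erase _ _ (Finset.mem_univ a)).symm

omit [DecidableEq ι'] in
lemma prod_split {M : Type*} [CommMonoid M] (a : ι) (f : ι → M) :
    ∏ i, f i = f a * ∏ i : {i // i ≠ a}, f i := by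
  rw [← Finset.prod_subtype (Finset.univ.erase a) (by simp) f]
  exact (Finset.mul_prod_erase _ _ (Finset.mem_univ a)).symm

lemma Eproj_reindex (e : Fin q → Fin q → ℝ) (j : ℕ) (σ : ι' ≃ ι) (x y : ι → Fin q) :
    Eproj e j (x ∘ σ) (y ∘ σ) = Eproj e j x y := by
  unfold Eproj
  rw [Finset.sum_filter, Finset.sum_filter]
  refine Fintype.sum_equiv (Equiv.arrowCongr σ (Equiv.refl (Fin q))) _ _ (fun v => ?_)
  have harr : ((Equiv.arrowCongr σ (Equiv.refl (Fin q))) v) = fun i => v (σ.symm i) := by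
    funext i; simp [Equiv.arrowCongr]
  have hx : ∏ i' : ι', e (v i') ((x ∘ σ) i') = ∏ i : ι, e (v (σ.symm i)) (x i) :=
    Fintype.prod_equiv σ _ _ (fun i => by simp)
  have hy : ∏ i' : ι', e (v i') ((y ∘ σ) i') = ∏ i : ι, e (v (σ.symm i)) (y i) :=
    Fintype.prod_equiv σ _ _ (fun i => by simp)
  simp only [harr]
  rw [wt_comp σ.symm v, hx, hy]

lemma Eproj_split [NeZero q] (e : Fin q → Fin q → ℝ) (a : ι) (j : ℕ) (x y : ι → Fin q) :
    Eproj e j x y =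
      (e 0 (x a) * e 0 (y a)) *
        Eproj e j (fun i : {i // i ≠ a} => x i) (fun i : {i // i ≠ a} => y i)
      + (∑ c ∈ Finset.univ.erase (0 : Fin q), e c (x a) * e c (y a)) *
        (if j = 0 then 0 else
          Eproj e (j - 1) (fun i : {i // i ≠ a} => x i) (fun i : {i // i ≠ a} => y i)) := by
  unfold Eproj
  rw [Finset.sum_filter]
  rw [← Equiv.sum_comp (Equiv.funSplitAt a (Fin q)).symm]
  rw [Fintype.sum_prod_type]
  have hva : ∀ (c : Fin q) (w : {i // i ≠ a} → Fin q),
      (Equiv.funSplitAt a (Fin q)).symm (c, w) a = c := by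
    intro c w; simp [Equiv.funSplitAt_symm_apply]
  have hvi : ∀ (c : Fin q) (w : {i // i ≠ a} → Fin q),
      (fun i : {i // i ≠ a} => (Equiv.funSplitAt a (Fin q)).symm (c, w) i) = w := by
    intro c w; funext i
    simp [Equiv.funSplitAt_symm_apply, i.2]
  have hwt : ∀ (c : Fin q) (w : {i // i ≠ a} → Fin q),
      wt ((Equiv.funSplitAt a (Fin q)).symm (c, w)) = (if c.val ≠ 0 then 1 else 0) + wt w := by
    intro c w
    rw [wt_split a, hva, hvi]
  have hprod : ∀ (c : Fin q) (w : {i // i ≠ a} → Fin q) (z : ι → Fin q),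
      (∏ i, e ((Equiv.funSplitAt a (Fin q)).symm (c, w) i) (z i))
        = e c (z a) * ∏ i : {i // i ≠ a}, e (w i) (z i) := by
    intro c w z
    rw [prod_split a, hva]
    congr 1
    refine Finset.prod_congr rfl (fun i _ => ?_)
    rw [show (Equiv.funSplitAt a (Fin q)).symm (c, w) i.1 = w i from congrFun (hvi c w) i]
  have hmain : ∀ (c : Fin q) (w : {i // i ≠ a} → Fin q),
      (if wt ((Equiv.funSplitAt a (Fin q)).symm (c, w)) = j then
        (∏ i, e ((Equiv.funSplitAt a (Fin q)).symm (c, w) i) (x i)) *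
        (∏ i, e ((Equiv.funSplitAt a (Fin q)).symm (c, w) i) (y i)) else 0)
      = (if (if c.val ≠ 0 then 1 else 0) + wt w = j then
          (e c (x a) * e c (y a)) *
            ((∏ i : {i // i ≠ a}, e (w i) (x i)) * (∏ i : {i // i ≠ a}, e (w i) (y i))) else 0) := by
    intro c w
    rw [hwt, hprod, hprod]
    split_ifs <;> ring
  simp only [hmain]
  rw [← Finset.add_sum_erase _ _ (Finset.mem_univ (0 : Fin q))]
  congr 1
  · -- c = 0 term
    rw [Finset.mul_sum, Finset.sum_filter]
    refine Finset.sum_congr rfl (fun w _ => ?_)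
    by_cases hw : wt w = j
    · rw [if_pos (by simpa using hw), if_pos hw]
    · rw [if_neg (by simpa using hw), if_neg hw]
  · -- c ≠ 0 terms
    rcases j with _ | j'
    · rw [if_pos rfl, mul_zero]
      refine Finset.sum_eq_zero (fun c hc => ?_)
      refine Finset.sum_eq_zero (fun w _ => ?_)
      have hc0 : c.val ≠ 0 := by
        simp only [Finset.mem_erase, Finset.mem_univ, and_true] at hc
        exact fun h => hc (Fin.ext (by rw [h, Fin.val_zero]))
      simp [hc0]
    · rw [if_neg (Nat.succ_ne_zero j'), Nat.succ_sub_one, Finset.sum_mul]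
      refine Finset.sum_congr rfl (fun c hc => ?_)
      have hc0 : c.val ≠ 0 := by
        simp only [Finset.mem_erase, Finset.mem_univ, and_true] at hc
        exact fun h => hc (Fin.ext (by rw [h, Fin.val_zero]))
      rw [Finset.mul_sum, Finset.sum_filter]
      refine Finset.sum_congr rfl (fun w _ => ?_)
      by_cases hw : wt w = j'
      · rw [if_pos (by simp only [if_pos hc0]; omega), if_pos hw]
      · rw [if_neg (by simp only [if_pos hc0]; omega), if_neg hw]

end Aux

section Aux2

lemma col_orth {q : ℕ} (e : Fin q → Fin q → ℝ)
    (he : ∀ i j : Fin q, ∑ x, e i x * e j x = if i = j then 1 else 0)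
    (s t : Fin q) : ∑ c, e c s * e c t = if s = t then 1 else 0 := by
  classical
  let M : Matrix (Fin q) (Fin q) ℝ := Matrix.of e
  have h1 : M * M.transpose = 1 := by
    ext i j
    simpa [Matrix.mul_apply, Matrix.one_apply, Matrix.transpose_apply, M] using he i j
  have h2 : M.transpose * M = 1 := mul_eq_one_comm.mp h1
  have h3 : (M.transpose * M) s t = (1 : Matrix (Fin q) (Fin q) ℝ) s t := by rw [h2]
  simpa [Matrix.mul_apply, Matrix.one_apply, Matrix.transpose_apply, M] using h3

lemma sum_erase_orth {q : ℕ} [NeZero q] (e : Fin q → Fin q → ℝ)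
    (s t : Fin q) (h : ∑ c, e c s * e c t = 0) :
    ∑ c ∈ Finset.univ.erase (0 : Fin q), e c s * e c t = -(e 0 s * e 0 t) := by
  have h2 := Finset.add_sum_erase Finset.univ (fun c => e c s * e c t) (Finset.mem_univ 0)
  have h3 := h2.trans h
  linarith

lemma Eproj_telescope {q : ℕ} {ι : Type*} [Fintype ι] [DecidableEq ι] [NeZero q]
    (e : Fin q → Fin q → ℝ) (a : ι) (x y : ι → Fin q)
    (h : ∑ c, e c (x a) * e c (y a) = 0) (d : ℕ) :
    ∑ j ∈ Finset.range (d + 1), Eproj e j x y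
      = (e 0 (x a) * e 0 (y a)) *
          Eproj e d (fun i : {i // i ≠ a} => x i) (fun i : {i // i ≠ a} => y i) := by
  have hs := sum_erase_orth e (x a) (y a) h
  induction d with
  | zero =>
    rw [Finset.sum_range_one, Eproj_split e a 0, hs, if_pos rfl, mul_zero, add_zero]
  | succ d ih =>
    rw [Finset.sum_range_succ, ih, Eproj_split e a (d + 1), hs,
      if_neg (Nat.succ_ne_zero d), Nat.succ_sub_one]
    ring

lemma abel_sum (α β : ℕ → ℝ) (N : ℕ) :
    ∑ m ∈ Finset.range (N + 1), α m * (β m - if m = 0 then 0 else β (m - 1))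
      = (∑ m ∈ Finset.range (N + 1), (α m - α (m + 1)) * β m) + α (N + 1) * β N := by
  induction N with
  | zero => simp; ring
  | succ N ih =>
    rw [Finset.sum_range_succ, ih,
      Finset.sum_range_succ (fun m => (α m - α (m + 1)) * β m) (N + 1),
      if_neg (Nat.succ_ne_zero N), Nat.succ_sub_one]
    ring

def eraseEquiv {n : ℕ} {B : Finset (Fin n)} {a₀ : Fin n} (h : a₀ ∈ B) :
    {i // i ∈ B.erase a₀} ≃ {i : {i // i ∈ B} // i ≠ (⟨a₀, h⟩ : {i // i ∈ B})} where
  toFun j := ⟨⟨j.1, Finset.mem_of_mem_erase j.2⟩,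
    fun hc => (Finset.mem_erase.mp j.2).1 (congrArg Subtype.val hc)⟩
  invFun j := ⟨j.1.1, Finset.mem_erase.mpr ⟨fun hv => j.2 (Subtype.ext hv), j.1.2⟩⟩
  left_inv j := rfl
  right_inv j := rfl

end Aux2

/-- `Γ̃` and `Γ̃₁` agree on every entry whose row label `(x, S)` and
column label `y` satisfy `x_1 ≠ y_1` (coordinate `1` of `[n]` is `⟨0, _⟩ : Fin n`). -/
theorem gamma_eq_gamma1_off_diagonal
    {q n k d : ℕ} [NeZero q] (hq : 2 ≤ q) (hk : 1 ≤ k) (hd : d + 1 ≤ k) (hn : k ≤ n)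
    (e : Fin q → Fin q → ℝ)
    (he : ∀ i j : Fin q, ∑ x, e i x * e j x = if i = j then 1 else 0)
    (he0 : ∀ x : Fin q, e 0 x = 1 / Real.sqrt q)
    (T : (S : Finset (Fin n)) → Finset ({i // i ∈ S} → Fin q))
    (hT : ∀ S : Finset (Fin n), S.card = k → IsOA d (T S))
    (α : ℕ → ℝ) (hlast : α (n - k + 1) = 0) :
    ∀ (p : Rows q n k T) (y : Fin n → Fin q),
      p.1.1 ⟨0, by omega⟩ ≠ y ⟨0, by omega⟩ →
      Gam k d T e α p y = Gam1 k d ⟨0, by omega⟩ T e α p y := by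
  intro p y hne
  obtain ⟨⟨x, S⟩, hSk, hxT⟩ := p
  have h0n : 0 < n := by omega
  set i₀ : Fin n := ⟨0, h0n⟩ with hi₀
  have hne' : x i₀ ≠ y i₀ := hne
  have horth : ∑ c, e c (x i₀) * e c (y i₀) = 0 := by
    rw [col_orth e he (x i₀) (y i₀), if_neg hne']
  simp only [Gam, Gam1]
  by_cases hmem : i₀ ∈ S
  · rw [if_pos hmem]
    have key : ∑ j ∈ Finset.range (d + 1), Eproj e j (restrict x S) (restrict y S)
        = (e 0 (x i₀) * e 0 (y i₀)) *
            Eproj e d (restrict x (S.erase i₀)) (restrict y (S.erase i₀)) := by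
      rw [Eproj_telescope e (⟨i₀, hmem⟩ : {i // i ∈ S}) (restrict x S) (restrict y S) horth d]
      simp only [show restrict x S ⟨i₀, hmem⟩ = x i₀ from rfl,
        show restrict y S ⟨i₀, hmem⟩ = y i₀ from rfl]
      congr 1
      exact (Eproj_reindex e d (eraseEquiv hmem)
        (fun i => restrict x S i.1) (fun i => restrict y S i.1)).symm
    refine Finset.sum_congr rfl (fun m _ => ?_)
    rw [key]
    ring
  · rw [if_neg hmem]
    rw [Finset.compl_insert]
    have hmc : i₀ ∈ Sᶜ := Finset.mem_compl.mpr hmem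
    have key : ∀ m : ℕ, Eproj e m (restrict x Sᶜ) (restrict y Sᶜ)
        = (e 0 (x i₀) * e 0 (y i₀)) *
            Eproj e m (restrict x (Sᶜ.erase i₀)) (restrict y (Sᶜ.erase i₀))
          - (if m = 0 then 0 else (e 0 (x i₀) * e 0 (y i₀)) *
              Eproj e (m - 1) (restrict x (Sᶜ.erase i₀)) (restrict y (Sᶜ.erase i₀))) := by
      intro m
      have hre : ∀ j : ℕ,
          Eproj e j (fun i : {i : {i // i ∈ Sᶜ} // i ≠ ⟨i₀, hmc⟩} => restrict x Sᶜ i.1)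
            (fun i : {i : {i // i ∈ Sᶜ} // i ≠ ⟨i₀, hmc⟩} => restrict y Sᶜ i.1)
            = Eproj e j (restrict x (Sᶜ.erase i₀)) (restrict y (Sᶜ.erase i₀)) := by
        intro j
        exact (Eproj_reindex e j (eraseEquiv hmc)
          (fun i => restrict x Sᶜ i.1) (fun i => restrict y Sᶜ i.1)).symm
      have horthc : ∑ c, e c (restrict x Sᶜ ⟨i₀, hmc⟩) * e c (restrict y Sᶜ ⟨i₀, hmc⟩) = 0 :=
        horth
      rw [Eproj_split e (⟨i₀, hmc⟩ : {i // i ∈ Sᶜ}) m (restrict x Sᶜ) (restrict y Sᶜ),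
        sum_erase_orth e _ _ horthc, hre, hre]
      simp only [show restrict x Sᶜ ⟨i₀, hmc⟩ = x i₀ from rfl,
        show restrict y Sᶜ ⟨i₀, hmc⟩ = y i₀ from rfl]
      split_ifs <;> ring
    have main := abel_sum α
      (fun m => (Real.sqrt ((q : ℝ) ^ (k - d)) *
          ∑ j ∈ Finset.range (d + 1), Eproj e j (restrict x S) (restrict y S)) *
        ((e 0 (x i₀) * e 0 (y i₀)) *
          Eproj e m (restrict x (Sᶜ.erase i₀)) (restrict y (Sᶜ.erase i₀)))) (n - k)
    rw [hlast, zero_mul, add_zero] at main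
    calc ∑ m ∈ Finset.range (n - k + 1),
          α m * (Real.sqrt ((q : ℝ) ^ (k - d)) *
            ∑ j ∈ Finset.range (d + 1), Eproj e j (restrict x S) (restrict y S)) *
          Eproj e m (restrict x Sᶜ) (restrict y Sᶜ)
        = ∑ m ∈ Finset.range (n - k + 1),
            α m * ((Real.sqrt ((q : ℝ) ^ (k - d)) *
              ∑ j ∈ Finset.range (d + 1), Eproj e j (restrict x S) (restrict y S)) *
            ((e 0 (x i₀) * e 0 (y i₀)) *
              Eproj e m (restrict x (Sᶜ.erase i₀)) (restrict y (Sᶜ.erase i₀)))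
            - if m = 0 then 0 else (Real.sqrt ((q : ℝ) ^ (k - d)) *
              ∑ j ∈ Finset.range (d + 1), Eproj e j (restrict x S) (restrict y S)) *
            ((e 0 (x i₀) * e 0 (y i₀)) *
              Eproj e (m - 1) (restrict x (Sᶜ.erase i₀)) (restrict y (Sᶜ.erase i₀)))) := by
          refine Finset.sum_congr rfl (fun m _ => ?_)
          rw [key m]
          split_ifs <;> ring
      _ = ∑ m ∈ Finset.range (n - k + 1),
            (α m - α (m + 1)) * ((Real.sqrt ((q : ℝ) ^ (k - d)) *
              ∑ j ∈ Finset.range (d + 1), Eproj e j (restrict x S) (restrict y S)) *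
            ((e 0 (x i₀) * e 0 (y i₀)) *
              Eproj e m (restrict x (Sᶜ.erase i₀)) (restrict y (Sᶜ.erase i₀)))) := main
      _ = _ := by
          refine Finset.sum_congr rfl (fun m _ => ?_)
          ring
end

section
/- Let A be a real matrix with rows indexed by a finite set R and columns by a finite set C, let φ : R → [q] and ψ : C → [q] be arbitrary labelings, and let B be the matrix with B[r,c] = A[r,c] whenever φ(r) ≠ ψ(c) and B[r,c] = 0 whenever φ(r) = ψ(c). Then ‖B‖ ≤ 2‖A‖, where ‖·‖ denotes the spectral norm. -/
open scoped BigOperators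

lemma euclid_normsq {m : Type*} [Fintype m] (v : EuclideanSpace ℝ m) :
    ‖v‖ ^ 2 = ∑ i, (v i) ^ 2 := by
  have h : ∑ i, (v i) ^ 2 = ∑ i, ‖v i‖ ^ 2 := by
    simp [Real.norm_eq_abs, sq_abs]
  rw [EuclideanSpace.norm_eq, h, Real.sq_sqrt (by positivity)]

lemma diag_part_norm_le {R C : Type*} [Fintype R] [Fintype C]
    [DecidableEq C] (q : ℕ)
    (A : Matrix R C ℝ) (φ : R → Fin q) (ψ : C → Fin q) :
    specNorm (fun r c => if φ r = ψ c then A r c else 0) ≤ specNorm A := by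
  set D : Matrix R C ℝ := fun r c => if φ r = ψ c then A r c else 0 with hD
  refine ContinuousLinearMap.opNorm_le_bound _ (norm_nonneg _) (fun x => ?_)
  -- restricted vectors
  set xi : Fin q → EuclideanSpace ℝ C :=
    fun i => (WithLp.equiv 2 (C → ℝ)).symm (fun c => if ψ c = i then x c else 0) with hxi
  have key : ∀ r, (D.mulVec (WithLp.equiv 2 (C → ℝ) x)) r
      = (A.mulVec (WithLp.equiv 2 (C → ℝ) (xi (φ r)))) r := by
    intro r
    simp only [Matrix.mulVec, dotProduct, hD, hxi, WithLp.equiv_symm_apply, PiLp.toLp_apply]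
    refine Finset.sum_congr rfl (fun c _ => ?_)
    rcases eq_or_ne (φ r) (ψ c) with h | h
    · simp [h]
    · simp [h, Ne.symm h]
  have hsq : ‖(LinearMap.toContinuousLinearMap (Matrix.toEuclideanLin D)) x‖ ^ 2
      ≤ (specNorm A * ‖x‖) ^ 2 := by
    rw [LinearMap.coe_toContinuousLinearMap', Matrix.toEuclideanLin_apply, euclid_normsq]
    have h1 : ∑ r, ((WithLp.equiv 2 (R → ℝ)).symm
        (D.mulVec (WithLp.equiv 2 (C → ℝ) x)) r) ^ 2
        = ∑ i, ∑ r, (if φ r = i then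
            ((A.mulVec (WithLp.equiv 2 (C → ℝ) (xi i))) r) ^ 2 else 0) := by
      rw [Finset.sum_comm]
      refine Finset.sum_congr rfl (fun r _ => ?_)
      rw [Finset.sum_ite_eq]
      simpa using congrArg (· ^ 2) (key r)
    refine h1.trans_le ?_
    have h2 : ∀ i : Fin q, ∑ r, (if φ r = i then
          ((A.mulVec (WithLp.equiv 2 (C → ℝ) (xi i))) r) ^ 2 else 0)
        ≤ (specNorm A) ^ 2 * ‖xi i‖ ^ 2 := by
      intro i
      have hb : ∑ r, (if φ r = i then
          ((A.mulVec (WithLp.equiv 2 (C → ℝ) (xi i))) r) ^ 2 else 0)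
          ≤ ∑ r, ((A.mulVec (WithLp.equiv 2 (C → ℝ) (xi i))) r) ^ 2 := by
        refine Finset.sum_le_sum (fun r _ => ?_)
        split_ifs
        · exact le_refl _
        · exact sq_nonneg _
      refine hb.trans ?_
      have : ∑ r, ((A.mulVec (WithLp.equiv 2 (C → ℝ) (xi i))) r) ^ 2
          = ‖(LinearMap.toContinuousLinearMap (Matrix.toEuclideanLin A)) (xi i)‖ ^ 2 := by
        rw [LinearMap.coe_toContinuousLinearMap', Matrix.toEuclideanLin_apply, euclid_normsq]
        rfl
      rw [this]
      have hle := (LinearMap.toContinuousLinearMap (Matrix.toEuclideanLin A)).le_opNorm (xi i)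
      calc ‖(LinearMap.toContinuousLinearMap (Matrix.toEuclideanLin A)) (xi i)‖ ^ 2
          ≤ (specNorm A * ‖xi i‖) ^ 2 := by
            exact pow_le_pow_left₀ (norm_nonneg _) hle 2
        _ = (specNorm A) ^ 2 * ‖xi i‖ ^ 2 := by ring
    have h3 : ∑ i : Fin q, ‖xi i‖ ^ 2 = ‖x‖ ^ 2 := by
      simp only [euclid_normsq, hxi, WithLp.equiv_symm_apply, PiLp.toLp_apply]
      rw [Finset.sum_comm]
      refine Finset.sum_congr rfl (fun c _ => ?_)
      have he : ∀ i : Fin q, (if ψ c = i then x c else 0) ^ 2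
          = if ψ c = i then (x c) ^ 2 else 0 := by
        intro i; split_ifs <;> simp
      simp_rw [he]
      rw [Finset.sum_ite_eq]
      simp
    calc ∑ i, ∑ r, (if φ r = i then
          ((A.mulVec (WithLp.equiv 2 (C → ℝ) (xi i))) r) ^ 2 else 0)
        ≤ ∑ i, (specNorm A) ^ 2 * ‖xi i‖ ^ 2 := Finset.sum_le_sum (fun i _ => h2 i)
      _ = (specNorm A) ^ 2 * ∑ i, ‖xi i‖ ^ 2 := by rw [Finset.mul_sum]
      _ = (specNorm A) ^ 2 * ‖x‖ ^ 2 := by rw [h3]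
      _ = (specNorm A * ‖x‖) ^ 2 := by ring
  have hnn : (0:ℝ) ≤ specNorm A * ‖x‖ :=
    mul_nonneg (norm_nonneg _) (norm_nonneg _)
  nlinarith [norm_nonneg ((LinearMap.toContinuousLinearMap (Matrix.toEuclideanLin D)) x)]

/-- zeroing out the entries of a real matrix `A` at the positions where
the labels `φ(r)` and `ψ(c)` coincide at most doubles the spectral norm
(the fact `γ₂(Δ_i) ≤ 2`). -/
theorem hadamard_pattern_norm_le_two_mul {R C : Type*} [Fintype R] [Fintype C]
    [DecidableEq C] (q : ℕ)
    (A B : Matrix R C ℝ) (φ : R → Fin q) (ψ : C → Fin q)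
    (hB : ∀ r c, B r c = if φ r = ψ c then 0 else A r c) :
    specNorm B ≤ 2 * specNorm A := by
  set D : Matrix R C ℝ := fun r c => if φ r = ψ c then A r c else 0 with hD
  have hBAD : B = A - D := by
    ext r c
    rw [hB r c]
    show _ = A r c - D r c
    by_cases h : φ r = ψ c <;> simp [hD, h]
  have hDle : specNorm D ≤ specNorm A := diag_part_norm_le q A φ ψ
  have : specNorm B ≤ specNorm A + specNorm D := by
    unfold specNorm
    rw [hBAD]
    calc ‖LinearMap.toContinuousLinearMap (Matrix.toEuclideanLin (A - D))‖
        = ‖LinearMap.toContinuousLinearMap (Matrix.toEuclideanLin A)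
          - LinearMap.toContinuousLinearMap (Matrix.toEuclideanLin D)‖ := by
          congr 1
          ext x
          simp [map_sub]
      _ ≤ _ := norm_sub_le _ _
  linarith
end

section
/- Let q ≥ 2, let X = [q], let 0 ≤ d ≤ k−1, let T ⊆ X^k be a d-(X,k,1) orthogonal array, and fix an orthonormal basis e_0, …, e_{q−1} of ℝ^q with e_0 = (1,…,1)/√q. Fix a subset L ⊆ [k] with |L| = k−d. For each tuple u = (u_1,…,u_k) ∈ {0,…,q−1}^k with u_i = 0 for all i ∈ L, let u^L ∈ ℝ^T be q^{(k−d)/2} times the restriction of the vector e_{u_1}⊗⋯⊗e_{u_k} ∈ (ℝ^q)^{⊗k} to the coordinates indexed by T. Then the family of vectors { u^L : u ∈ {0,…,q−1}^k, u_L = 0 } is an orthonormal family in ℝ^T. -/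
open scoped BigOperators

/-- for a `d`-`([q],k,1)` orthogonal array `T`, an orthonormal basis
`e_0, …, e_{q-1}` of `ℝ^q` with `e_0 = (1,…,1)/√q`, and a subset `L ⊆ [k]` with
`|L| = k - d`, the vectors `u^L = q^{(k-d)/2} · (e_{u_1} ⊗ ⋯ ⊗ e_{u_k})|_T`, for tuples
`u` vanishing on `L`, form an orthonormal family in `ℝ^T`:  pairwise inner products are
`1` for equal tuples and `0` for distinct ones. -/
theorem restricted_tensors_orthonormal (q k d : ℕ) [NeZero q] (hq : 2 ≤ q)
    (hd : d + 1 ≤ k)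
    (T : Finset (Fin k → Fin q)) (hT : IsOA d T)
    (e : Fin q → Fin q → ℝ)
    (he : ∀ i j : Fin q, ∑ x, e i x * e j x = if i = j then 1 else 0)
    (he0 : ∀ x : Fin q, e 0 x = 1 / Real.sqrt q)
    (L : Finset (Fin k)) (hL : L.card = k - d) :
    ∀ u u' : Fin k → Fin q, (∀ i ∈ L, u i = 0) → (∀ i ∈ L, u' i = 0) →
      (∑ t : ↥T,
          (Real.sqrt ((q : ℝ) ^ (k - d)) * ∏ i, e (u i) ((t : Fin k → Fin q) i)) *
          (Real.sqrt ((q : ℝ) ^ (k - d)) * ∏ i, e (u' i) ((t : Fin k → Fin q) i))) =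
        if u = u' then 1 else 0 := by
  intro u u' hu hu'
  have hdk : d ≤ k := Nat.le_of_succ_le hd
  have hq0 : (q : ℝ) ≠ 0 := Nat.cast_ne_zero.2 (NeZero.ne q)
  set D : Finset (Fin k) := Lᶜ with hDdef
  have hD : D.card = d := by
    have h1 : D.card = k - L.card := by
      simp [hDdef, Finset.card_compl]
    have h2 : L.card ≤ k := by
      simpa using L.card_le_univ
    omega
  have huniq := hT.2 D hD
  -- the restriction map to coordinates in D is bijective
  have hbij : Function.Bijective
      (fun t : ↥T => (fun i : ↥D => (t : Fin k → Fin q) i.1)) := by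
    constructor
    · rintro ⟨t, ht⟩ ⟨t', ht'⟩ hfun
      have h1 : t = t' := by
        refine (huniq t).unique ⟨ht, fun _ _ => rfl⟩ ⟨ht', fun i hi => ?_⟩
        exact (congrFun hfun ⟨i, hi⟩).symm
      exact Subtype.ext h1
    · intro y
      obtain ⟨x, ⟨hxT, hx⟩, -⟩ :=
        huniq (fun i => if h : i ∈ D then y ⟨i, h⟩ else 0)
      refine ⟨⟨x, hxT⟩, funext fun i => ?_⟩
      simpa [i.2] using hx i.1 i.2
  set g : Fin k → Fin q → ℝ := fun i x => e (u i) x * e (u' i) x with hgdef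
  have hsqrt : Real.sqrt ((q : ℝ) ^ (k - d)) * Real.sqrt ((q : ℝ) ^ (k - d))
      = (q : ℝ) ^ (k - d) := Real.mul_self_sqrt (by positivity)
  have hgL : ∀ i ∈ L, ∀ x : Fin q, g i x = ((q : ℝ)⁻¹) := by
    intro i hi x
    have hs : Real.sqrt q * Real.sqrt q = (q : ℝ) := Real.mul_self_sqrt (by positivity)
    have hsne : Real.sqrt q ≠ 0 := by
      intro h0
      rw [h0, mul_zero] at hs
      exact hq0 hs.symm
    rw [hgdef]
    simp only [hu i hi, hu' i hi, he0]
    field_simp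
    rw [sq, hs]
  -- rewrite each summand
  have hterm : ∀ t : ↥T,
      (Real.sqrt ((q : ℝ) ^ (k - d)) * ∏ i, e (u i) ((t : Fin k → Fin q) i)) *
      (Real.sqrt ((q : ℝ) ^ (k - d)) * ∏ i, e (u' i) ((t : Fin k → Fin q) i))
      = ∏ i ∈ D, g i ((t : Fin k → Fin q) i) := by
    intro t
    have h1 : (∏ i, e (u i) ((t : Fin k → Fin q) i)) *
        (∏ i, e (u' i) ((t : Fin k → Fin q) i))
        = ∏ i, g i ((t : Fin k → Fin q) i) := by
      rw [← Finset.prod_mul_distrib]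
    have h2 : (∏ i, g i ((t : Fin k → Fin q) i))
        = (∏ i ∈ L, g i ((t : Fin k → Fin q) i)) *
          ∏ i ∈ D, g i ((t : Fin k → Fin q) i) := by
      rw [hDdef, Finset.prod_mul_prod_compl]
    have h3 : (∏ i ∈ L, g i ((t : Fin k → Fin q) i)) = ((q : ℝ)⁻¹) ^ (k - d) := by
      rw [Finset.prod_congr rfl (fun i hi => hgL i hi _), Finset.prod_const, hL]
    have h4 : (q : ℝ) ^ (k - d) * ((q : ℝ)⁻¹) ^ (k - d) = 1 := by
      rw [← mul_pow, mul_inv_cancel₀ hq0, one_pow]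
    calc (Real.sqrt ((q : ℝ) ^ (k - d)) * ∏ i, e (u i) ((t : Fin k → Fin q) i)) *
        (Real.sqrt ((q : ℝ) ^ (k - d)) * ∏ i, e (u' i) ((t : Fin k → Fin q) i))
        = ((q : ℝ) ^ (k - d) * ((q : ℝ)⁻¹) ^ (k - d)) *
          ∏ i ∈ D, g i ((t : Fin k → Fin q) i) := by
          rw [mul_mul_mul_comm, hsqrt, h1, h2, h3]; ring
      _ = ∏ i ∈ D, g i ((t : Fin k → Fin q) i) := by rw [h4, one_mul]
  rw [Finset.sum_congr rfl (fun t _ => hterm t)]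
  -- transport the sum along the bijection
  have h5 : ∀ t : ↥T, (∏ i ∈ D, g i ((t : Fin k → Fin q) i))
      = ∏ i ∈ D.attach, g i.1 ((t : Fin k → Fin q) i.1) := by
    intro t
    exact (Finset.prod_attach D _).symm
  rw [Finset.sum_congr rfl (fun t _ => h5 t)]
  have h6 : (∑ t : ↥T, ∏ i ∈ D.attach, g i.1 ((t : Fin k → Fin q) i.1))
      = ∑ y : ↥D → Fin q, ∏ i : ↥D, g i.1 (y i) :=
    hbij.sum_comp (fun y : ↥D → Fin q => ∏ i : ↥D, g i.1 (y i))
  rw [h6]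
  have h7 : (∑ y : ↥D → Fin q, ∏ i : ↥D, g i.1 (y i))
      = ∏ i : ↥D, ∑ x : Fin q, g i.1 x := by
    rw [Finset.prod_univ_sum]
    rw [Fintype.piFinset_univ]
  rw [h7]
  have h8 : ∀ i : ↥D, (∑ x : Fin q, g i.1 x) = if u i.1 = u' i.1 then 1 else 0 := by
    intro i
    exact he (u i.1) (u' i.1)
  rw [Finset.prod_congr rfl (fun i _ => h8 i)]
  by_cases h : u = u'
  · simp [h]
  · rw [if_neg h]
    have hex : ∃ i : ↥D, u i.1 ≠ u' i.1 := by
      by_contra hc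
      push_neg at hc
      apply h
      funext i
      by_cases hi : i ∈ L
      · rw [hu i hi, hu' i hi]
      · exact hc ⟨i, by simpa [hDdef] using hi⟩
    obtain ⟨i, hi⟩ := hex
    exact Finset.prod_eq_zero (Finset.mem_univ i) (if_neg hi)
end
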